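/- arXiv:1701.04188 — 7 statements merged into one kernel-verified Lean document; each statement's English description precedes it below -/
import Mathlib

section
/- Let G = (V,E) be a graph with a root v₀ ∈ V. Put L₀ = {v₀} and recursively L_k = { v ∈ V \ (L₀ ∪ … ∪ L_{k−1}) : there exists w ∈ L_{k−1} with w a neighbor of v }, for k ∈ ℕ₊. If the map k ↦ |L_k| grows faster than any polynomial function of degree N (i.e., |L_k| / k^N → ∞ as k → ∞), then there is no mixing embedding of G in Z^N. -/
open MeasureTheory ProbabilityTheory Filter
open scoped ENNReal NNReal

noncomputable section

/-- The supremum (ℓ∞) distance `d_{∞,ℤ^N}` on the lattice `ℤ^N`, with values in `ℕ`. -/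
def distZ {N : ℕ} (x y : Fin N → ℤ) : ℕ :=
  Finset.univ.sup fun i => (x i - y i).natAbs

/-- A graph `G` with node set `V` has a *mixing embedding* in `ℤ^N` if `G` is isomorphic to a
graph `G'` with node set `V' ⊆ ℤ^N` (i.e. there is an injection `φ : V → ℤ^N`, the graph
structure of `G'` being the one transported along `φ`) such that for every sequence of pairs
`((vᵢ, wᵢ) : i ∈ ℕ)` of nodes, boundedness of the graph distances `d_G(vᵢ, wᵢ)` implies
boundedness of the sup-distances `d_{∞,ℤ^N}(φ vᵢ, φ wᵢ)` of the images. -/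
def MixingEmbedding {V : Type*} (G : SimpleGraph V) (N : ℕ) : Prop :=
  ∃ φ : V → (Fin N → ℤ), Function.Injective φ ∧
    ∀ vw : ℕ → V × V,
      (∃ M : ℕ, ∀ i, G.edist (vw i).1 (vw i).2 ≤ (M : ℕ∞)) →
      (∃ M' : ℕ, ∀ i, distZ (φ (vw i).1) (φ (vw i).2) ≤ M')

/-- The α-mixing coefficient of a real-valued random field `Z` indexed by `V`, with respect to
an extended-ℕ-valued distance `ed` on the index set `V` and a measure `μ`:
`α(n)` is the supremum over index sets `I, J ⊆ V` with `d(I,J) ≥ n` of the supremum over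
`A ∈ σ(Z_v : v ∈ I)`, `B ∈ σ(Z_w : w ∈ J)` of `|μ(A ∩ B) − μ(A)·μ(B)|`. -/
def alphaMix {Ω : Type*} [MeasurableSpace Ω] (μ : Measure Ω) {V : Type*}
    (ed : V → V → ℕ∞) (Z : V → Ω → ℝ) (n : ℕ) : ℝ :=
  ⨆ I : Set V, ⨆ J : Set V, ⨆ (_ : ∀ v ∈ I, ∀ w ∈ J, (n : ℕ∞) ≤ ed v w),
  ⨆ A : Set Ω, ⨆ (_ : MeasurableSet[⨆ v ∈ I, MeasurableSpace.comap (Z v) inferInstance] A),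
  ⨆ B : Set Ω, ⨆ (_ : MeasurableSet[⨆ w ∈ J, MeasurableSpace.comap (Z w) inferInstance] B),
    |(μ (A ∩ B)).toReal - (μ A).toReal * (μ B).toReal|

/-- The nodes of the tree growing at an exponential rate `A`:
`V = {(j,k) : j ∈ ℕ, 1 ≤ k ≤ A^j}`. -/
def TreeNode (A : ℕ) : Type := {p : ℕ × ℕ // 1 ≤ p.2 ∧ p.2 ≤ A ^ p.1}

/-- The tree growing at an exponential rate `A`: the node `(j,k)` is joined to its children
`(j+1, A(k-1)+1), …, (j+1, Ak)`. -/
def expTree (A : ℕ) : SimpleGraph (TreeNode A) where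
  Adj v w := (w.1.1 = v.1.1 + 1 ∧ A * (v.1.2 - 1) + 1 ≤ w.1.2 ∧ w.1.2 ≤ A * v.1.2)
    ∨ (v.1.1 = w.1.1 + 1 ∧ A * (w.1.2 - 1) + 1 ≤ v.1.2 ∧ v.1.2 ≤ A * w.1.2)
  symm := ⟨fun v w h => Or.symm h⟩
  loopless := ⟨fun v h => by rcases h with ⟨h, -⟩ | ⟨h, -⟩ <;> omega⟩

/-- `V(j,k,P)`: the node set of the subtree of the tree growing at exponential rate `A`
rooted at the node `(j,k)` and consisting of `P` generations. -/
def subtreeNodes (A j k P : ℕ) : Set (TreeNode A) :=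
  {v | j ≤ v.1.1 ∧ v.1.1 ≤ j + P - 1 ∧
    A ^ (v.1.1 - j) * (k - 1) + 1 ≤ v.1.2 ∧ v.1.2 ≤ A ^ (v.1.1 - j) * k}

/-- `N(P,L)`: the combinatorial sum
`Σ_{h=0}^{⌊P−1−L/2⌋} A^h Σ_{i=max(1,L−(P−1−h))}^{min(L,P−1−h)} A^i (2·1{L=i} + (A−1)A^{L−i−1}·1{L>i})`.
(Here `⌊P−1−L/2⌋ = P−1−⌈L/2⌉` and `⌈L/2⌉ = (L+1)/2` in natural-number division.) -/
def npairs (A P L : ℕ) : ℕ :=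
  ∑ h ∈ Finset.range (P - 1 - (L + 1) / 2 + 1),
    A ^ h * ∑ i ∈ Finset.Icc (max 1 (L - (P - 1 - h))) (min L (P - 1 - h)),
      A ^ i * (2 * (if L = i then 1 else 0) + (A - 1) * A ^ (L - i - 1) * (if i < L then 1 else 0))

end

/-- The layers of a rooted graph: `L₀ = {v₀}` and
`L_k = {v ∈ V \ (L₀ ∪ … ∪ L_{k−1}) : ∃ w ∈ L_{k−1}, w is a neighbour of v}`. -/
def layer {V : Type*} (G : SimpleGraph V) (v₀ : V) : ℕ → Set V
  | 0 => {v₀}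
  | k + 1 => {v | (∀ i, i ≤ k → v ∉ layer G v₀ i) ∧ ∃ w ∈ layer G v₀ k, G.Adj v w}

lemma le_distZ {N : ℕ} (x y : Fin N → ℤ) (i : Fin N) : (x i - y i).natAbs ≤ distZ x y :=
  Finset.le_sup (f := fun i => (x i - y i).natAbs) (Finset.mem_univ i)

lemma distZ_triangle {N : ℕ} (x y z : Fin N → ℤ) : distZ x z ≤ distZ x y + distZ y z := by
  apply Finset.sup_le
  intro i _
  have : x i - z i = (x i - y i) + (y i - z i) := by ring
  calc (x i - z i).natAbs ≤ (x i - y i).natAbs + (y i - z i).natAbs := by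
        rw [this]; exact Int.natAbs_add_le _ _
    _ ≤ distZ x y + distZ y z :=
        Nat.add_le_add (le_distZ x y i) (le_distZ y z i)


/-- **Proposition (no mixing embedding under super-polynomial layer growth).**
If the layer sizes `|L_k|` of a rooted graph `G` grow faster than any polynomial of degree `N`
(i.e. `|L_k|/k^N → ∞`), then there is no mixing embedding of `G` in `ℤ^N`. -/
theorem stmt2 {V : Type*} (G : SimpleGraph V) (v₀ : V) (N : ℕ)
    (hfin : ∀ k, (layer G v₀ k).Finite)
    (hgrow : Tendsto (fun k : ℕ => (Nat.card (layer G v₀ k) : ℝ) / (k : ℝ) ^ N)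
      atTop atTop) :
    ¬ MixingEmbedding G N := by
  rintro ⟨φ, hinj, hmix⟩
  -- Step 1: uniform bound C for images of adjacent pairs
  have hC : ∃ C : ℕ, ∀ v w : V, G.Adj v w → distZ (φ v) (φ w) ≤ C := by
    by_contra h
    push_neg at h
    choose p q hpq hgt using h
    obtain ⟨M', hM'⟩ := hmix (fun i => (p i, q i)) ⟨1, fun i => by
      have := SimpleGraph.edist_le ((hpq i).toWalk)
      simpa using this⟩
    exact absurd (hM' M') (by simpa using (hgt M').not_ge)
  obtain ⟨C, hCle⟩ := hC
  -- Step 2: vertices in layer k map within distance C*k of φ v₀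
  have hdist : ∀ k, ∀ v ∈ layer G v₀ k, distZ (φ v) (φ v₀) ≤ C * k := by
    intro k
    induction k with
    | zero => intro v hv; simp only [layer, Set.mem_singleton_iff] at hv; subst hv; simp [distZ]
    | succ n ih =>
      intro v hv
      simp only [layer, Set.mem_setOf_eq] at hv
      obtain ⟨-, w, hw, hadj⟩ := hv
      calc distZ (φ v) (φ v₀) ≤ distZ (φ v) (φ w) + distZ (φ w) (φ v₀) := distZ_triangle _ _ _
        _ ≤ C + C * n := Nat.add_le_add (hCle _ _ hadj) (ih w hw)
        _ = C * (n + 1) := by ring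
  -- Step 3: cardinality bound |L_k| ≤ (2*C*k+1)^N
  have hcard : ∀ k : ℕ, Nat.card (layer G v₀ k) ≤ (2 * (C * k) + 1) ^ N := by
    intro k
    set B : Finset (Fin N → ℤ) := Finset.Icc (fun i => φ v₀ i - (C*k : ℕ)) (fun i => φ v₀ i + (C*k : ℕ)) with hB
    have hsub : φ '' (layer G v₀ k) ⊆ ↑B := by
      rintro _ ⟨v, hv, rfl⟩
      have hd := hdist k v hv
      simp only [hB, Finset.coe_Icc, Set.mem_Icc, Pi.le_def]
      constructor <;> intro i <;>
      · have h2 : (φ v i - φ v₀ i).natAbs ≤ C*k := le_trans (le_distZ (φ v) (φ v₀) i) hd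
        push_cast at h2 ⊢
        omega
    have hcardB : B.card = (2 * (C*k) + 1) ^ N := by
      rw [hB, Pi.card_Icc]
      have h4 : ∀ i : Fin N, (φ v₀ i + (C:ℤ)*k + 1 - (φ v₀ i - (C:ℤ)*k)).toNat = 2 * (C*k) + 1 := by
        intro i; omega
      simp [Int.card_Icc, h4]
    calc Nat.card (layer G v₀ k) = (layer G v₀ k).ncard := (Nat.card_coe_set_eq _)
      _ = (φ '' (layer G v₀ k)).ncard := (Set.ncard_image_of_injective _ hinj).symm
      _ ≤ (↑B : Set (Fin N → ℤ)).ncard := Set.ncard_le_ncard hsub (B.finite_toSet)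
      _ = B.card := by rw [Set.ncard_coe_finset]
      _ = (2 * (C*k) + 1) ^ N := hcardB
  -- Step 4: contradiction with superpolynomial growth
  have hbound : ∀ k : ℕ, 1 ≤ k →
      (Nat.card (layer G v₀ k) : ℝ) / (k : ℝ) ^ N ≤ ((2 * C + 1) ^ N : ℕ) := by
    intro k hk
    have hkpos : (0 : ℝ) < (k : ℝ) ^ N := by positivity
    rw [div_le_iff₀ hkpos]
    have h1 : Nat.card (layer G v₀ k) ≤ (2 * C + 1) ^ N * k ^ N := by
      calc Nat.card (layer G v₀ k) ≤ (2 * (C * k) + 1) ^ N := hcard k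
        _ ≤ ((2 * C + 1) * k) ^ N := by
            apply Nat.pow_le_pow_left; nlinarith
        _ = (2 * C + 1) ^ N * k ^ N := by rw [mul_pow]
    calc (Nat.card (layer G v₀ k) : ℝ) ≤ ((2 * C + 1) ^ N * k ^ N : ℕ) := by exact_mod_cast h1
      _ = ((2 * C + 1) ^ N : ℕ) * (k : ℝ) ^ N := by push_cast; ring
  obtain ⟨k, hk1, hk2⟩ := ((hgrow.eventually_ge_atTop (((2 * C + 1) ^ N : ℕ) + 1)).and
    (eventually_ge_atTop 1)).exists
  have := hbound k hk2
  linarith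
end

section
/- Let A ∈ ℕ with A ≥ 2 and let T = (V,E) be the tree growing at exponential rate A. Then for every N ∈ ℕ₊ there is no mixing embedding of T in Z^N. -/
open MeasureTheory ProbabilityTheory Filter
open scoped ENNReal NNReal

section Aux

lemma distZ_self {N : ℕ} (x : Fin N → ℤ) : distZ x x = 0 := by
  simp [distZ]

def treeRoot (A : ℕ) : TreeNode A := ⟨(0, 1), le_refl 1, by simp⟩

def treeParent {A : ℕ} (hA : 1 ≤ A) (v : TreeNode A) : TreeNode A :=
  if h : v.1.1 = 0 then v
  else ⟨(v.1.1 - 1, (v.1.2 - 1) / A + 1), Nat.le_add_left 1 _, by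
    show (v.1.2 - 1) / A + 1 ≤ A ^ (v.1.1 - 1)
    have hk := v.2.2
    have h1 := v.2.1
    have hpow : A ^ (v.1.1 - 1) * A = A ^ v.1.1 := by
      rw [← pow_succ]; congr 1; omega
    have hlt : v.1.2 - 1 < A ^ (v.1.1 - 1) * A := by rw [hpow]; omega
    have := (Nat.div_lt_iff_lt_mul (by omega : 0 < A)).mpr hlt
    omega⟩

lemma treeParent_spec {A : ℕ} (hA : 1 ≤ A) (v : TreeNode A) (h : v.1.1 ≠ 0) :
    (treeParent hA v).1 = (v.1.1 - 1, (v.1.2 - 1) / A + 1) := by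
  simp [treeParent, h]

lemma treeParent_adj {A : ℕ} (hA : 1 ≤ A) (v : TreeNode A) (h : v.1.1 ≠ 0) :
    (expTree A).Adj v (treeParent hA v) := by
  have hs := treeParent_spec hA v h
  have hdm := Nat.div_add_mod (v.1.2 - 1) A
  have hml : (v.1.2 - 1) % A < A := Nat.mod_lt _ (by omega)
  have h1 := v.2.1
  have hma : A * ((v.1.2 - 1) / A + 1) = A * ((v.1.2 - 1) / A) + A := by ring
  refine Or.inr ⟨?_, ?_, ?_⟩ <;> rw [hs] <;> simp <;> omega

lemma adj_edist_le_one {V : Type*} {G : SimpleGraph V} {u v : V} (h : G.Adj u v) :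
    G.edist u v ≤ 1 := by
  have := SimpleGraph.edist_le h.toWalk
  simpa using this

end Aux

/-- **The tree growing at an exponential rate `A ≥ 2` has no mixing embedding in any `ℤ^N`.** -/
theorem stmt4 (A : ℕ) (hA : 2 ≤ A) (N : ℕ) (hN : 1 ≤ N) :
    ¬ MixingEmbedding (expTree A) N := by
  rintro ⟨φ, hinj, hmix⟩
  have hA1 : 1 ≤ A := by omega
  haveI : Countable (TreeNode A) := by unfold TreeNode; infer_instance
  haveI : Nonempty (TreeNode A) := ⟨treeRoot A⟩
  obtain ⟨e, he⟩ := exists_surjective_nat (TreeNode A)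
  have hbound : ∃ M : ℕ, ∀ i, (expTree A).edist (e i, treeParent hA1 (e i)).1
      (e i, treeParent hA1 (e i)).2 ≤ (M : ℕ∞) := by
    refine ⟨1, fun i => ?_⟩
    by_cases h : (e i).1.1 = 0
    · simp [treeParent, h, SimpleGraph.edist_self]
    · exact adj_edist_le_one (treeParent_adj hA1 (e i) h)
  obtain ⟨M', hM'⟩ := hmix (fun i => (e i, treeParent hA1 (e i))) hbound
  have hstep : ∀ v : TreeNode A, distZ (φ v) (φ (treeParent hA1 v)) ≤ M' := by
    intro v
    obtain ⟨i, rfl⟩ := he v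
    exact hM' i
  have hroot0 : ∀ v : TreeNode A, v.1.1 = 0 → v = treeRoot A := by
    intro v hv
    have h1 := v.2.1
    have h2 := v.2.2
    rw [hv, pow_zero] at h2
    have hk : v.1.2 = 1 := by omega
    exact Subtype.ext (Prod.ext hv hk)
  have key : ∀ j : ℕ, ∀ v : TreeNode A, v.1.1 = j →
      distZ (φ v) (φ (treeRoot A)) ≤ j * M' := by
    intro j
    induction j with
    | zero =>
      intro v hv
      rw [hroot0 v hv]
      simp [distZ_self]
    | succ j ih =>
      intro v hv
      have hne : v.1.1 ≠ 0 := by omega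
      have hplevel : (treeParent hA1 v).1.1 = j := by
        rw [treeParent_spec hA1 v hne]
        simp
        omega
      calc distZ (φ v) (φ (treeRoot A))
          ≤ distZ (φ v) (φ (treeParent hA1 v)) +
            distZ (φ (treeParent hA1 v)) (φ (treeRoot A)) := distZ_triangle _ _ _
        _ ≤ M' + j * M' := add_le_add (hstep v) (ih _ hplevel)
        _ = (j + 1) * M' := by ring
  classical
  set r := φ (treeRoot A) with hr
  have count : ∀ J : ℕ, A ^ J ≤ (2 * (J * M') + 1) ^ N := by
    intro J
    set box : Finset (Fin N → ℤ) :=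
      Fintype.piFinset (fun i => Finset.Icc (r i - (J * M' : ℕ)) (r i + (J * M' : ℕ)))
      with hbox
    have hcard : box.card = (2 * (J * M') + 1) ^ N := by
      rw [hbox, Fintype.card_piFinset]
      have hic : ∀ i : Fin N,
          (Finset.Icc (r i - (J * M' : ℕ)) (r i + (J * M' : ℕ))).card = 2 * (J * M') + 1 := by
        intro i
        rw [Int.card_Icc]
        have h2 : r i + (J * M' : ℕ) + 1 - (r i - (J * M' : ℕ))
            = ((2 * (J * M') + 1 : ℕ) : ℤ) := by push_cast; ring
        rw [h2, Int.toNat_natCast]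
      simp only [hic, Finset.prod_const, Finset.card_univ, Fintype.card_fin]
    have hsub : ∀ k (hk : 1 ≤ k ∧ k ≤ A ^ J),
        φ (⟨(J, k), hk.1, hk.2⟩ : TreeNode A) ∈ box := by
      intro k hk
      rw [hbox, Fintype.mem_piFinset]
      intro i
      set v : TreeNode A := ⟨(J, k), hk.1, hk.2⟩ with hv
      have hd : Finset.univ.sup (fun j => (φ v j - r j).natAbs) ≤ J * M' := key J v rfl
      have hco : (φ v i - r i).natAbs ≤ J * M' :=
        le_trans (Finset.le_sup (f := fun j => (φ v j - r j).natAbs) (Finset.mem_univ i)) hd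
      have habs : |φ v i - r i| ≤ ((J * M' : ℕ) : ℤ) := by
        rw [Int.abs_eq_natAbs]; exact_mod_cast hco
      rw [Finset.mem_Icc]
      have := abs_le.mp habs
      omega
    have hmaps : ∀ k ∈ Finset.Icc 1 (A ^ J),
        (fun k => if hk : 1 ≤ k ∧ k ≤ A ^ J then φ ⟨(J, k), hk.1, hk.2⟩ else r) k ∈ box := by
      intro k hk
      rw [Finset.mem_Icc] at hk
      simp only [dif_pos hk]
      exact hsub k hk
    have hinjOn : Set.InjOn
        (fun k => if hk : 1 ≤ k ∧ k ≤ A ^ J then φ ⟨(J, k), hk.1, hk.2⟩ else r)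
        (Finset.Icc 1 (A ^ J)) := by
      intro a ha b hb hab
      simp only [Finset.coe_Icc, Set.mem_Icc] at ha hb
      dsimp only at hab
      rw [dif_pos ha, dif_pos hb] at hab
      have := hinj hab
      simpa using congrArg (fun v : TreeNode A => v.1.2) this
    have hle := Finset.card_le_card_of_injOn _ hmaps hinjOn
    rw [Nat.card_Icc] at hle
    have hA0 : 1 ≤ A ^ J := Nat.one_le_pow _ _ (by omega)
    omega
  set c : ℕ := 2 * M' + 1 with hc
  have hlo := isLittleO_pow_const_const_pow_of_one_lt (R := ℝ) N (by norm_num : (1 : ℝ) < 2)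
  have hε : (0 : ℝ) < 1 / ((c : ℝ) ^ N + 1) := by positivity
  obtain ⟨J, hJb, hJ1⟩ := ((hlo.def hε).and (Filter.eventually_ge_atTop 1)).exists
  have h2pos : (0 : ℝ) < (2 : ℝ) ^ J := by positivity
  have hnorm : (J : ℝ) ^ N ≤ (1 / ((c : ℝ) ^ N + 1)) * (2 : ℝ) ^ J := by
    rwa [Real.norm_eq_abs, Real.norm_eq_abs, abs_of_nonneg (by positivity),
      abs_of_nonneg (by positivity)] at hJb
  have hcJ : ((2 * (J * M') + 1 : ℕ) : ℝ) ≤ (c : ℝ) * J := by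
    have h1J : 1 ≤ (J : ℝ) := by exact_mod_cast hJ1
    have hc' : (c : ℝ) = 2 * (M' : ℝ) + 1 := by rw [hc]; push_cast; ring
    push_cast
    rw [hc']
    nlinarith
  have hlt : (((2 * (J * M') + 1) ^ N : ℕ) : ℝ) < (2 : ℝ) ^ J := by
    have h1 : (((2 * (J * M') + 1) ^ N : ℕ) : ℝ) = ((2 * (J * M') + 1 : ℕ) : ℝ) ^ N := by
      push_cast; ring
    rw [h1]
    have h2 : ((2 * (J * M') + 1 : ℕ) : ℝ) ^ N ≤ ((c : ℝ) * J) ^ N :=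
      pow_le_pow_left₀ (by positivity) hcJ N
    have h3 : ((c : ℝ) * J) ^ N = (c : ℝ) ^ N * (J : ℝ) ^ N := by ring
    have h4 : (c : ℝ) ^ N * (J : ℝ) ^ N ≤ (c : ℝ) ^ N * ((1 / ((c : ℝ) ^ N + 1)) * (2 : ℝ) ^ J) :=
      mul_le_mul_of_nonneg_left hnorm (by positivity)
    have h5 : (c : ℝ) ^ N * ((1 / ((c : ℝ) ^ N + 1)) * (2 : ℝ) ^ J) < (2 : ℝ) ^ J := by
      rw [← mul_assoc]
      have h6 : (c : ℝ) ^ N * (1 / ((c : ℝ) ^ N + 1)) < 1 := by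
        rw [mul_one_div, div_lt_one (by positivity)]
        linarith
      nlinarith
    linarith
  have hfin : (2 * (J * M') + 1) ^ N < A ^ J := by
    have h2A : ((2 : ℝ)) ^ J ≤ ((A : ℕ) : ℝ) ^ J := by
      apply pow_le_pow_left₀ (by norm_num)
      exact_mod_cast hA
    have hAJ : (((2 * (J * M') + 1) ^ N : ℕ) : ℝ) < ((A ^ J : ℕ) : ℝ) := by
      push_cast
      push_cast at hlt
      linarith
    exact_mod_cast hAJ
  exact absurd (count J) (not_le.mpr hfin)
end

section
/- Let T = (V,E) be the tree growing at exponential rate A, let (j,k) ∈ V, P ∈ ℕ₊, and consider the subgraph of T induced by the node set V(j,k,P). Then for every L with 1 ≤ L ≤ 2(P−1), the number of ordered pairs (v,w) ∈ V(j,k,P) × V(j,k,P) with d_T(v,w) = L equals N(P,L) = Σ_{h=0}^{⌊P−1−L/2⌋} A^h · Σ_{i = max(1, L−(P−1−h))}^{min(L, P−1−h)} A^i · ( 2·1{L = i} + (A−1)·A^{L−i−1}·1{L > i} ). -/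
open MeasureTheory ProbabilityTheory Filter
open scoped ENNReal NNReal

namespace S5

def eqAt (A d1 e1 d2 e2 m : ℕ) : Prop := e1 / A ^ (d1 - m) = e2 / A ^ (d2 - m)

instance (A d1 e1 d2 e2 m : ℕ) : Decidable (eqAt A d1 e1 d2 e2 m) :=
  inferInstanceAs (Decidable (_ = _))

def meet (A d1 e1 d2 e2 : ℕ) : ℕ := Nat.findGreatest (eqAt A d1 e1 d2 e2) (min d1 d2)

lemma eqAt_zero {A d1 e1 d2 e2 : ℕ} (h1 : e1 < A ^ d1) (h2 : e2 < A ^ d2) :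
    eqAt A d1 e1 d2 e2 0 := by
  unfold eqAt
  simp only [Nat.sub_zero]
  rw [Nat.div_eq_of_lt h1, Nat.div_eq_of_lt h2]

lemma eqAt_mono {A d1 e1 d2 e2 m m' : ℕ} (hm' : m' ≤ m) (h1 : m ≤ d1) (h2 : m ≤ d2)
    (h : eqAt A d1 e1 d2 e2 m) : eqAt A d1 e1 d2 e2 m' := by
  unfold eqAt at *
  have p1 : A ^ (d1 - m') = A ^ (d1 - m) * A ^ (m - m') := by rw [← pow_add]; congr 1; omega
  have p2 : A ^ (d2 - m') = A ^ (d2 - m) * A ^ (m - m') := by rw [← pow_add]; congr 1; omega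
  rw [p1, p2, ← Nat.div_div_eq_div_mul, ← Nat.div_div_eq_div_mul, h]

lemma meet_le {A d1 e1 d2 e2 : ℕ} : meet A d1 e1 d2 e2 ≤ min d1 d2 :=
  Nat.findGreatest_le _

lemma eqAt_meet {A d1 e1 d2 e2 : ℕ} (h1 : e1 < A ^ d1) (h2 : e2 < A ^ d2) :
    eqAt A d1 e1 d2 e2 (meet A d1 e1 d2 e2) :=
  Nat.findGreatest_spec (Nat.zero_le _) (eqAt_zero h1 h2)

lemma le_meet {A d1 e1 d2 e2 m : ℕ} (hm : m ≤ min d1 d2) (h : eqAt A d1 e1 d2 e2 m) :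
    m ≤ meet A d1 e1 d2 e2 :=
  Nat.le_findGreatest hm h

lemma node_lt {A : ℕ} (v : TreeNode A) : v.1.2 - 1 < A ^ v.1.1 := by
  have := v.2; omega

/-- distance function on the tree -/
def D {A : ℕ} (v w : TreeNode A) : ℕ :=
  v.1.1 + w.1.1 - 2 * meet A v.1.1 (v.1.2 - 1) w.1.1 (w.1.2 - 1)

lemma adj_iff {A : ℕ} (hA : 1 ≤ A) (v w : TreeNode A) :
    (expTree A).Adj v w ↔
      (w.1.1 = v.1.1 + 1 ∧ (w.1.2 - 1) / A = v.1.2 - 1) ∨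
      (v.1.1 = w.1.1 + 1 ∧ (v.1.2 - 1) / A = w.1.2 - 1) := by
  have hv := v.2; have hw := w.2
  have key : ∀ a b : ℕ, 1 ≤ a → 1 ≤ b →
      ((A * (a - 1) + 1 ≤ b ∧ b ≤ A * a) ↔ (b - 1) / A = a - 1) := by
    intro a b ha hb
    have hc1 : (a - 1) * A = A * (a - 1) := Nat.mul_comm _ _
    have hc2 : (a - 1 + 1) * A = A * (a - 1) + A := by
      rw [Nat.succ_mul, Nat.mul_comm]
    have hc3 : A * a = A * (a - 1) + A := by rw [← Nat.mul_succ]; congr 1; omega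
    constructor
    · rintro ⟨h1, h2⟩
      refine Nat.div_eq_of_lt_le (by omega) (by omega)
    · intro h
      have hmod := Nat.div_add_mod (b - 1) A
      have hlt : (b - 1) % A < A := Nat.mod_lt _ (by omega)
      rw [h] at hmod
      omega
  constructor
  · rintro (⟨h1, h2⟩ | ⟨h1, h2⟩)
    · exact Or.inl ⟨h1, (key _ _ hv.1 hw.1).1 h2⟩
    · exact Or.inr ⟨h1, (key _ _ hw.1 hv.1).1 h2⟩
  · rintro (⟨h1, h2⟩ | ⟨h1, h2⟩)
    · exact Or.inl ⟨h1, (key _ _ hv.1 hw.1).2 h2⟩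
    · exact Or.inr ⟨h1, (key _ _ hw.1 hv.1).2 h2⟩

end S5

namespace S5

/-- ancestor of `v` at level `m` (equals `v` itself if `m ≥` level of `v`). -/
def ancNode (m : ℕ) {A : ℕ} (v : TreeNode A) : TreeNode A :=
  ⟨(min m v.1.1, (v.1.2 - 1) / A ^ (v.1.1 - m) + 1), by
    have hgoal : (v.1.2 - 1) / A ^ (v.1.1 - m) < A ^ min m v.1.1 := by
      have he : v.1.2 - 1 < A ^ v.1.1 := node_lt v
      have hsplit : A ^ v.1.1 = A ^ min m v.1.1 * A ^ (v.1.1 - m) := by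
        rw [← pow_add]; congr 1; omega
      rcases Nat.eq_zero_or_pos (A ^ (v.1.1 - m)) with h0 | hpos
      · rw [h0, Nat.mul_zero] at hsplit; omega
      · rw [Nat.div_lt_iff_lt_mul hpos, ← hsplit]; exact he
    exact ⟨Nat.le_add_left 1 _, hgoal⟩⟩

lemma ancNode_j {A : ℕ} (m : ℕ) (v : TreeNode A) : (ancNode m v).1.1 = min m v.1.1 := rfl

lemma ancNode_e {A : ℕ} (m : ℕ) (v : TreeNode A) :
    (ancNode m v).1.2 - 1 = (v.1.2 - 1) / A ^ (v.1.1 - m) := by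
  simp [ancNode]

lemma ancNode_of_le {A : ℕ} {m : ℕ} {v : TreeNode A} (h : v.1.1 ≤ m) : ancNode m v = v := by
  have hv := v.2
  apply Subtype.ext
  have h1 : v.1.1 - m = 0 := by omega
  show (min m v.1.1, (v.1.2 - 1) / A ^ (v.1.1 - m) + 1) = v.1
  rw [h1, pow_zero, Nat.div_one]
  have : min m v.1.1 = v.1.1 := by omega
  rw [this]
  have : v.1.2 - 1 + 1 = v.1.2 := by omega
  rw [this]

lemma adj_parent {A : ℕ} (hA : 1 ≤ A) (v : TreeNode A) (h : 1 ≤ v.1.1) :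
    (expTree A).Adj v (ancNode (v.1.1 - 1) v) := by
  rw [adj_iff hA]
  right
  constructor
  · rw [ancNode_j]; omega
  · rw [ancNode_e]
    have : v.1.1 - (v.1.1 - 1) = 1 := by omega
    rw [this, pow_one]

lemma walk_to_anc {A : ℕ} (hA : 1 ≤ A) :
    ∀ (n : ℕ) (v : TreeNode A) (m : ℕ), m ≤ v.1.1 → v.1.1 - m = n →
    ∃ p : (expTree A).Walk v (ancNode m v), p.length = n := by
  intro n
  induction n with
  | zero =>
    intro v m h1 h2
    have hm : v.1.1 ≤ m := by omega
    exact ⟨SimpleGraph.Walk.nil.copy rfl (ancNode_of_le hm).symm, by simp⟩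
  | succ n ih =>
    intro v m h1 h2
    set u := ancNode (v.1.1 - 1) v with hu
    have hju : u.1.1 = v.1.1 - 1 := by rw [hu, ancNode_j]; omega
    have hadj : (expTree A).Adj v u := adj_parent hA v (by omega)
    have hkey : ancNode m u = ancNode m v := by
      apply Subtype.ext
      have heu : u.1.2 - 1 = (v.1.2 - 1) / A := by
        rw [hu, ancNode_e]
        have : v.1.1 - (v.1.1 - 1) = 1 := by omega
        rw [this, pow_one]
      show (min m u.1.1, (u.1.2 - 1) / A ^ (u.1.1 - m) + 1)
        = (min m v.1.1, (v.1.2 - 1) / A ^ (v.1.1 - m) + 1)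
      rw [heu, hju]
      have hmin : min m (v.1.1 - 1) = min m v.1.1 := by omega
      have hpow : A * A ^ (v.1.1 - 1 - m) = A ^ (v.1.1 - m) := by
        rw [← pow_succ']; congr 1; omega
      rw [hmin, Nat.div_div_eq_div_mul, hpow]
    obtain ⟨p, hp⟩ := ih u m (by omega) (by omega)
    exact ⟨SimpleGraph.Walk.cons hadj (p.copy rfl hkey), by simp [hp]⟩

lemma ancNode_meet_eq {A : ℕ} (v w : TreeNode A) :
    ancNode (meet A v.1.1 (v.1.2 - 1) w.1.1 (w.1.2 - 1)) v
      = ancNode (meet A v.1.1 (v.1.2 - 1) w.1.1 (w.1.2 - 1)) w := by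
  set s := meet A v.1.1 (v.1.2 - 1) w.1.1 (w.1.2 - 1) with hs
  have hsle : s ≤ min v.1.1 w.1.1 := meet_le
  have heq : eqAt A v.1.1 (v.1.2 - 1) w.1.1 (w.1.2 - 1) s := eqAt_meet (node_lt v) (node_lt w)
  apply Subtype.ext
  show (min s v.1.1, (v.1.2 - 1) / A ^ (v.1.1 - s) + 1)
    = (min s w.1.1, (w.1.2 - 1) / A ^ (w.1.1 - s) + 1)
  unfold eqAt at heq
  rw [heq]
  congr 1
  omega

lemma edist_le_D {A : ℕ} (hA : 1 ≤ A) (v w : TreeNode A) :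
    (expTree A).edist v w ≤ (D v w : ℕ∞) := by
  set s := meet A v.1.1 (v.1.2 - 1) w.1.1 (w.1.2 - 1) with hs
  have hsle : s ≤ min v.1.1 w.1.1 := meet_le
  obtain ⟨p1, hp1⟩ := walk_to_anc hA (v.1.1 - s) v s (by omega) rfl
  obtain ⟨p2, hp2⟩ := walk_to_anc hA (w.1.1 - s) w s (by omega) rfl
  have hz : ancNode s w = ancNode s v := (ancNode_meet_eq v w).symm
  have hD : D v w = (v.1.1 - s) + (w.1.1 - s) := by
    unfold D; omega
  calc (expTree A).edist v w
      ≤ ((p1.append (p2.copy rfl hz).reverse).length : ℕ∞) := SimpleGraph.edist_le _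
    _ = (D v w : ℕ∞) := by
        rw [SimpleGraph.Walk.length_append, SimpleGraph.Walk.length_reverse,
          SimpleGraph.Walk.length_copy, hp1, hp2, hD]

end S5

namespace S5

lemma eqAt_transfer {A : ℕ} {ju ev eu jw ew m : ℕ} (he : ev / A = eu) (hm : m ≤ ju) :
    (eqAt A (ju + 1) ev jw ew m ↔ eqAt A ju eu jw ew m) := by
  unfold eqAt
  have h1 : A ^ (ju + 1 - m) = A * A ^ (ju - m) := by
    rw [← pow_succ']; congr 1; omega
  rw [h1, ← Nat.div_div_eq_div_mul, he]

lemma D_parent {A : ℕ} (u v w : TreeNode A) (hj : v.1.1 = u.1.1 + 1)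
    (he : (v.1.2 - 1) / A = u.1.2 - 1) :
    D v w = D u w + 1 ∨ D u w = D v w + 1 := by
  have hv := node_lt v; have hw := node_lt w; have hu := node_lt u
  set sv := meet A v.1.1 (v.1.2 - 1) w.1.1 (w.1.2 - 1) with hsv
  set su := meet A u.1.1 (u.1.2 - 1) w.1.1 (w.1.2 - 1) with hsu
  have hDv : D v w = v.1.1 + w.1.1 - 2 * sv := rfl
  have hDu : D u w = u.1.1 + w.1.1 - 2 * su := rfl
  have hsvle : sv ≤ min v.1.1 w.1.1 := meet_le
  have hsule : su ≤ min u.1.1 w.1.1 := meet_le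
  have heqv : eqAt A v.1.1 (v.1.2 - 1) w.1.1 (w.1.2 - 1) sv := eqAt_meet hv hw
  have hequ : eqAt A u.1.1 (u.1.2 - 1) w.1.1 (w.1.2 - 1) su := eqAt_meet hu hw
  by_cases hc : sv ≤ min u.1.1 w.1.1
  · have h1 : sv ≤ su := by
      apply le_meet hc
      rw [← eqAt_transfer he (by omega)]
      have hj' : u.1.1 + 1 = v.1.1 := hj.symm
      rw [hj']
      exact heqv
    have h2 : su ≤ sv := by
      apply le_meet (by omega)
      rw [hj, eqAt_transfer he (by omega)]
      exact hequ
    left; omega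
  · push_neg at hc
    have hequ' : eqAt A u.1.1 (u.1.2 - 1) w.1.1 (w.1.2 - 1) u.1.1 := by
      rw [← eqAt_transfer he le_rfl]
      have hj' : u.1.1 + 1 = v.1.1 := hj.symm
      rw [hj']
      exact eqAt_mono (by omega) (by omega) (by omega) heqv
    have h1 : u.1.1 ≤ su := le_meet (by omega) hequ'
    right; omega

lemma D_step {A : ℕ} (hA : 1 ≤ A) {v u : TreeNode A} (w : TreeNode A)
    (hadj : (expTree A).Adj v u) : D v w ≤ D u w + 1 := by
  rw [adj_iff hA] at hadj
  rcases hadj with ⟨h1, h2⟩ | ⟨h1, h2⟩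
  · rcases D_parent v u w h1 h2 with h | h <;> omega
  · rcases D_parent u v w h1 h2 with h | h <;> omega

lemma D_self {A : ℕ} (v : TreeNode A) : D v v = 0 := by
  have h : v.1.1 ≤ meet A v.1.1 (v.1.2 - 1) v.1.1 (v.1.2 - 1) := by
    apply le_meet (by omega)
    unfold eqAt
    rfl
  have hD : D v v = v.1.1 + v.1.1 - 2 * meet A v.1.1 (v.1.2 - 1) v.1.1 (v.1.2 - 1) := rfl
  have := @meet_le A v.1.1 (v.1.2 - 1) v.1.1 (v.1.2 - 1)
  omega

lemma D_le_walk {A : ℕ} (hA : 1 ≤ A) {v w : TreeNode A} (p : (expTree A).Walk v w) :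
    D v w ≤ p.length := by
  induction p with
  | nil => simp [D_self]
  | @cons a b c h q ih =>
    rw [SimpleGraph.Walk.length_cons]
    have := D_step hA c h
    omega

lemma edist_eq_D {A : ℕ} (hA : 1 ≤ A) (v w : TreeNode A) :
    (expTree A).edist v w = (D v w : ℕ∞) := by
  refine le_antisymm (edist_le_D hA v w) ?_
  rw [SimpleGraph.edist_eq_sInf]
  apply le_sInf
  rintro x ⟨p, rfl⟩
  show (D v w : ℕ∞) ≤ (p.length : ℕ∞)
  exact_mod_cast D_le_walk hA p

end S5

namespace S5
open Finset

lemma g_count (A : ℕ) (hA : 1 ≤ A) (d1 d2 m : ℕ) (hm1 : m ≤ d1) (hm2 : m ≤ d2) :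
    (((range (A ^ d1)) ×ˢ (range (A ^ d2))).filter
      (fun e : ℕ × ℕ => e.1 / A ^ (d1 - m) = e.2 / A ^ (d2 - m))).card
      = A ^ (d1 + d2 - m) := by
  have hq1 : 0 < A ^ (d1 - m) := Nat.pow_pos hA
  have hq2 : 0 < A ^ (d2 - m) := Nat.pow_pos hA
  have hs1 : A ^ d1 = A ^ m * A ^ (d1 - m) := by rw [← pow_add]; congr 1; omega
  have hs2 : A ^ d2 = A ^ m * A ^ (d2 - m) := by rw [← pow_add]; congr 1; omega
  rw [Finset.card_bij' (t := ((range (A ^ m)) ×ˢ (range (A ^ (d1 - m)))) ×ˢ (range (A ^ (d2 - m))))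
    (i := fun e _ => ((e.1 / A ^ (d1 - m), e.1 % A ^ (d1 - m)), e.2 % A ^ (d2 - m)))
    (j := fun x _ => (A ^ (d1 - m) * x.1.1 + x.1.2, A ^ (d2 - m) * x.1.1 + x.2))
    ?_ ?_ ?_ ?_]
  · rw [card_product, card_product, card_range, card_range, card_range, ← pow_add, ← pow_add]
    congr 1
    omega
  · rintro ⟨e1, e2⟩ ha
    simp only [mem_filter, mem_product, mem_range] at ha ⊢
    obtain ⟨⟨he1, he2⟩, heq⟩ := ha
    refine ⟨⟨?_, Nat.mod_lt _ hq1⟩, Nat.mod_lt _ hq2⟩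
    rw [Nat.div_lt_iff_lt_mul hq1, ← hs1]
    exact he1
  · rintro ⟨⟨c, r1⟩, r2⟩ ha
    simp only [mem_product, mem_range] at ha
    obtain ⟨⟨hc, hr1⟩, hr2⟩ := ha
    simp only [mem_filter, mem_product, mem_range]
    have k1 : A ^ (d1 - m) * c + r1 < A ^ d1 := by
      have : A ^ (d1 - m) * (c + 1) ≤ A ^ (d1 - m) * A ^ m :=
        Nat.mul_le_mul_left _ hc
      have h1 : A ^ (d1 - m) * (c + 1) = A ^ (d1 - m) * c + A ^ (d1 - m) := by ring
      have h2 : A ^ (d1 - m) * A ^ m = A ^ d1 := by rw [← pow_add]; congr 1; omega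
      omega
    have k2 : A ^ (d2 - m) * c + r2 < A ^ d2 := by
      have : A ^ (d2 - m) * (c + 1) ≤ A ^ (d2 - m) * A ^ m :=
        Nat.mul_le_mul_left _ hc
      have h1 : A ^ (d2 - m) * (c + 1) = A ^ (d2 - m) * c + A ^ (d2 - m) := by ring
      have h2 : A ^ (d2 - m) * A ^ m = A ^ d2 := by rw [← pow_add]; congr 1; omega
      omega
    refine ⟨⟨k1, k2⟩, ?_⟩
    rw [Nat.mul_add_div hq1, Nat.mul_add_div hq2, Nat.div_eq_of_lt hr1, Nat.div_eq_of_lt hr2]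
  · rintro ⟨e1, e2⟩ ha
    simp only [mem_filter, mem_product, mem_range] at ha
    obtain ⟨-, heq⟩ := ha
    have h1 := Nat.div_add_mod e1 (A ^ (d1 - m))
    have h2 := Nat.div_add_mod e2 (A ^ (d2 - m))
    have : A ^ (d2 - m) * (e1 / A ^ (d1 - m)) = A ^ (d2 - m) * (e2 / A ^ (d2 - m)) := by
      rw [heq]
    simp only [Prod.mk.injEq]
    omega
  · rintro ⟨⟨c, r1⟩, r2⟩ ha
    simp only [mem_product, mem_range] at ha
    obtain ⟨⟨hc, hr1⟩, hr2⟩ := ha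
    simp only [Prod.mk.injEq]
    refine ⟨⟨?_, ?_⟩, ?_⟩
    · rw [Nat.mul_add_div hq1, Nat.div_eq_of_lt hr1]; omega
    · rw [Nat.mul_add_mod, Nat.mod_eq_of_lt hr1]
    · rw [Nat.mul_add_mod, Nat.mod_eq_of_lt hr2]

end S5

namespace S5
open Finset

lemma meet_eq_h_iff (A : ℕ) {d1 e1 d2 e2 h : ℕ} (hh : h ≤ min d1 d2)
    (h1 : e1 < A ^ d1) (h2 : e2 < A ^ d2) :
    meet A d1 e1 d2 e2 = h ↔
      (eqAt A d1 e1 d2 e2 h ∧ (h = min d1 d2 ∨ ¬ eqAt A d1 e1 d2 e2 (h + 1))) := by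
  constructor
  · intro hm
    refine ⟨hm ▸ eqAt_meet h1 h2, ?_⟩
    rcases eq_or_lt_of_le hh with he | hlt
    · exact Or.inl he
    · refine Or.inr (Nat.findGreatest_is_greatest (n := min d1 d2) ?_ ?_)
      · rw [show Nat.findGreatest (eqAt A d1 e1 d2 e2) (min d1 d2) = meet A d1 e1 d2 e2 from rfl,
          hm]
        omega
      · omega
  · rintro ⟨heq, hor⟩
    have hle : h ≤ meet A d1 e1 d2 e2 := le_meet hh heq
    have hub : meet A d1 e1 d2 e2 ≤ min d1 d2 := meet_le
    rcases hor with he | hne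
    · omega
    · by_contra hne2
      have hgt : h + 1 ≤ meet A d1 e1 d2 e2 := by omega
      exact hne (eqAt_mono hgt (by omega) (by omega) (eqAt_meet h1 h2))

lemma meet_count (A : ℕ) (hA : 1 ≤ A) (L h i : ℕ) (hL : 1 ≤ L) (hiL : i ≤ L) :
    (((range (A ^ (h + i))) ×ˢ (range (A ^ (h + (L - i))))).filter
      (fun e : ℕ × ℕ => (h + i) + (h + (L - i)) = L + 2 * meet A (h + i) e.1 (h + (L - i)) e.2)).card
      = if i = 0 ∨ i = L then A ^ (L + h) else (A - 1) * A ^ (L + h - 1) := by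
  set d1 := h + i with hd1
  set d2 := h + (L - i) with hd2
  have hsum : d1 + d2 = L + 2 * h := by omega
  have hmin : h ≤ min d1 d2 := by omega
  -- rewrite filter condition as meet = h
  have hcongr : (((range (A ^ d1)) ×ˢ (range (A ^ d2))).filter
      (fun e : ℕ × ℕ => d1 + d2 = L + 2 * meet A d1 e.1 d2 e.2))
      = (((range (A ^ d1)) ×ˢ (range (A ^ d2))).filter
      (fun e : ℕ × ℕ => meet A d1 e.1 d2 e.2 = h)) := by
    apply filter_congr
    intro x hx
    constructor
    · intro hc; omega
    · intro hc; omega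
  rw [hcongr]
  by_cases hcase : i = 0 ∨ i = L
  · -- h = min d1 d2
    have hminh : h = min d1 d2 := by
      rcases hcase with rfl | rfl <;> omega
    have : (((range (A ^ d1)) ×ˢ (range (A ^ d2))).filter
        (fun e : ℕ × ℕ => meet A d1 e.1 d2 e.2 = h))
        = (((range (A ^ d1)) ×ˢ (range (A ^ d2))).filter
        (fun e : ℕ × ℕ => e.1 / A ^ (d1 - h) = e.2 / A ^ (d2 - h))) := by
      apply filter_congr
      intro x hx
      simp only [mem_product, mem_range] at hx
      rw [meet_eq_h_iff A hmin hx.1 hx.2]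
      constructor
      · rintro ⟨heq, -⟩; exact heq
      · intro heq; exact ⟨heq, Or.inl hminh⟩
    rw [this, if_pos hcase, g_count A hA d1 d2 h (by omega) (by omega)]
    congr 1
    omega
  · -- 0 < i < L, so h < min d1 d2
    push_neg at hcase
    have hlt : h + 1 ≤ min d1 d2 := by omega
    have hsdiff : (((range (A ^ d1)) ×ˢ (range (A ^ d2))).filter
        (fun e : ℕ × ℕ => meet A d1 e.1 d2 e.2 = h))
        = (((range (A ^ d1)) ×ˢ (range (A ^ d2))).filter
            (fun e : ℕ × ℕ => e.1 / A ^ (d1 - h) = e.2 / A ^ (d2 - h)))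
          \ (((range (A ^ d1)) ×ˢ (range (A ^ d2))).filter
            (fun e : ℕ × ℕ => e.1 / A ^ (d1 - (h + 1)) = e.2 / A ^ (d2 - (h + 1)))) := by
      ext x
      simp only [mem_filter, Finset.mem_sdiff, mem_product, mem_range]
      constructor
      · rintro ⟨hx, hm⟩
        have := (meet_eq_h_iff A hmin hx.1 hx.2).1 hm
        refine ⟨⟨hx, this.1⟩, ?_⟩
        rintro ⟨-, habs⟩
        rcases this.2 with he | hne
        · omega
        · exact hne habs
      · rintro ⟨⟨hx, heq⟩, hne⟩
        refine ⟨hx, (meet_eq_h_iff A hmin hx.1 hx.2).2 ⟨heq, Or.inr ?_⟩⟩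
        intro habs
        exact hne ⟨hx, habs⟩
    rw [hsdiff, card_sdiff_of_subset, g_count A hA d1 d2 h (by omega) (by omega),
      g_count A hA d1 d2 (h + 1) (by omega) (by omega), if_neg (by omega)]
    · have e1 : d1 + d2 - h = L + h := by omega
      have e2 : d1 + d2 - (h + 1) = L + h - 1 := by omega
      rw [e1, e2]
      have e3 : A ^ (L + h) = A * A ^ (L + h - 1) := by
        rw [← pow_succ']; congr 1; omega
      have e4 : (A - 1) * A ^ (L + h - 1) = A * A ^ (L + h - 1) - A ^ (L + h - 1) := by
        rw [Nat.sub_mul, one_mul]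
      omega
    · intro x hx
      simp only [mem_filter] at hx ⊢
      exact ⟨hx.1, eqAt_mono (A := A) (e1 := x.1) (e2 := x.2) (Nat.le_succ h)
        (by omega) (by omega) hx.2⟩

end S5

namespace S5

lemma pow_bound {A j k d e : ℕ} (hA : 1 ≤ A) (hk : 1 ≤ k) (hkA : k ≤ A ^ j)
    (he : e < A ^ d) : A ^ d * (k - 1) + e < A ^ (j + d) := by
  have h1 : A ^ d * k = A ^ d * (k - 1) + A ^ d := by
    rw [← Nat.mul_succ]; congr 1; omega
  have h2 : A ^ d * k ≤ A ^ d * A ^ j := Nat.mul_le_mul_left _ hkA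
  have h3 : A ^ (j + d) = A ^ d * A ^ j := by rw [pow_add, Nat.mul_comm]
  omega

lemma eqAt_shift {A j k d1 e1 d2 e2 m : ℕ} (hA : 1 ≤ A) (hm1 : m ≤ d1) (hm2 : m ≤ d2) :
    eqAt A (j + d1) (A ^ d1 * (k - 1) + e1) (j + d2) (A ^ d2 * (k - 1) + e2) (j + m)
      ↔ eqAt A d1 e1 d2 e2 m := by
  unfold eqAt
  have q1 : 0 < A ^ (d1 - m) := Nat.pow_pos hA
  have q2 : 0 < A ^ (d2 - m) := Nat.pow_pos hA
  have r1 : j + d1 - (j + m) = d1 - m := by omega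
  have r2 : j + d2 - (j + m) = d2 - m := by omega
  have s1 : A ^ d1 * (k - 1) = A ^ (d1 - m) * (A ^ m * (k - 1)) := by
    rw [← mul_assoc, ← pow_add]; congr 2; omega
  have s2 : A ^ d2 * (k - 1) = A ^ (d2 - m) * (A ^ m * (k - 1)) := by
    rw [← mul_assoc, ← pow_add]; congr 2; omega
  rw [r1, r2, s1, s2, Nat.mul_add_div q1, Nat.mul_add_div q2]
  omega

lemma meet_shift {A j k d1 e1 d2 e2 : ℕ} (hA : 1 ≤ A) (hk : 1 ≤ k) (hkA : k ≤ A ^ j)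
    (h1 : e1 < A ^ d1) (h2 : e2 < A ^ d2) :
    meet A (j + d1) (A ^ d1 * (k - 1) + e1) (j + d2) (A ^ d2 * (k - 1) + e2)
      = j + meet A d1 e1 d2 e2 := by
  have hE1 : A ^ d1 * (k - 1) + e1 < A ^ (j + d1) := pow_bound hA hk hkA h1
  have hE2 : A ^ d2 * (k - 1) + e2 < A ^ (j + d2) := pow_bound hA hk hkA h2
  set s := meet A d1 e1 d2 e2 with hs
  have hsle : s ≤ min d1 d2 := meet_le
  have hloc : eqAt A d1 e1 d2 e2 s := eqAt_meet h1 h2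
  set G := meet A (j + d1) (A ^ d1 * (k - 1) + e1) (j + d2) (A ^ d2 * (k - 1) + e2) with hG
  have hge : j + s ≤ G :=
    le_meet (by omega) ((eqAt_shift hA (by omega) (by omega)).2 hloc)
  have hj : eqAt A (j + d1) (A ^ d1 * (k - 1) + e1) (j + d2) (A ^ d2 * (k - 1) + e2) j := by
    have := (eqAt_shift (j := j) (k := k) (e1 := e1) (e2 := e2) hA (Nat.zero_le d1)
      (Nat.zero_le d2)).2 (eqAt_zero h1 h2)
    simpa using this
  have hjle : j ≤ G := le_meet (by omega) hj
  have hub : G ≤ min (j + d1) (j + d2) := meet_le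
  have heqG : eqAt A (j + d1) (A ^ d1 * (k - 1) + e1) (j + d2) (A ^ d2 * (k - 1) + e2) G :=
    eqAt_meet hE1 hE2
  have hGs : G ≤ j + s := by
    have hG' : G = j + (G - j) := by omega
    have hloc' : eqAt A d1 e1 d2 e2 (G - j) := by
      rw [← eqAt_shift (j := j) (k := k) hA (by omega) (by omega), ← hG']
      exact heqG
    have := le_meet (A := A) (d1 := d1) (e1 := e1) (d2 := d2) (e2 := e2)
      (m := G - j) (by omega) hloc'
    omega
  omega

end S5

namespace S5
open Finset

lemma sigma_mk_eq {a b c d : ℕ} (h1 : a = c) (h2 : b = d) :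
    (⟨a, b⟩ : Σ _ : ℕ, ℕ) = ⟨c, d⟩ := by subst h1; subst h2; rfl

lemma term_mid (A L h i : ℕ) (h2 : i < L) :
    A ^ h * (A ^ i * (2 * (if L = i then 1 else 0)
      + (A - 1) * A ^ (L - i - 1) * (if i < L then 1 else 0)))
    = (A - 1) * A ^ (L + h - 1) := by
  rw [if_neg (by omega), if_pos h2]
  have hp : A ^ h * A ^ i * A ^ (L - i - 1) = A ^ (L + h - 1) := by
    rw [← pow_add, ← pow_add]; congr 1; omega
  calc A ^ h * (A ^ i * (2 * 0 + (A - 1) * A ^ (L - i - 1) * 1))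
      = (A - 1) * (A ^ h * A ^ i * A ^ (L - i - 1)) := by ring
    _ = (A - 1) * A ^ (L + h - 1) := by rw [hp]

lemma npairs_eq (A P L : ℕ) (hL : 1 ≤ L) :
    npairs A P L = ∑ x ∈ (range (P - 1 - (L + 1) / 2 + 1)).sigma
        (fun h => Icc (L - (P - 1 - h)) (min L (P - 1 - h))),
      (if x.2 = 0 ∨ x.2 = L then A ^ (L + x.1) else (A - 1) * A ^ (L + x.1 - 1)) := by
  rw [Finset.sum_sigma]
  unfold npairs
  apply Finset.sum_congr rfl
  intro h hh
  show A ^ h * ∑ i ∈ Icc (max 1 (L - (P - 1 - h))) (min L (P - 1 - h)),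
      A ^ i * (2 * (if L = i then 1 else 0) + (A - 1) * A ^ (L - i - 1) * (if i < L then 1 else 0))
    = ∑ i ∈ Icc (L - (P - 1 - h)) (min L (P - 1 - h)),
      (if i = 0 ∨ i = L then A ^ (L + h) else (A - 1) * A ^ (L + h - 1))
  by_cases hC : L ≤ P - 1 - h
  · have hlo : L - (P - 1 - h) = 0 := by omega
    have hhi : min L (P - 1 - h) = L := by omega
    have hlo' : max 1 (L - (P - 1 - h)) = 1 := by omega
    rw [hlo', hhi, hlo]
    have hsplit0 : Icc 0 L = insert 0 (Icc 1 L) := by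
      ext x; simp only [mem_Icc, mem_insert]; omega
    have hsplitL : Icc 1 L = insert L (Icc 1 (L - 1)) := by
      ext x; simp only [mem_Icc, mem_insert]; omega
    have hLnot : L ∉ Icc 1 (L - 1) := by simp only [mem_Icc]; omega
    have h0not : (0 : ℕ) ∉ Icc 1 L := by simp only [mem_Icc]; omega
    have hpw : A ^ h * A ^ L = A ^ (L + h) := by rw [← pow_add]; congr 1; omega
    have lhs_eq : A ^ h * ∑ i ∈ Icc 1 L, A ^ i * (2 * (if L = i then 1 else 0)
        + (A - 1) * A ^ (L - i - 1) * (if i < L then 1 else 0))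
        = 2 * A ^ (L + h) + (L - 1) * ((A - 1) * A ^ (L + h - 1)) := by
      rw [hsplitL, sum_insert hLnot, mul_add]
      have ht : A ^ h * (A ^ L * (2 * (if L = L then 1 else 0)
          + (A - 1) * A ^ (L - L - 1) * (if L < L then 1 else 0))) = 2 * A ^ (L + h) := by
        rw [if_pos rfl, if_neg (lt_irrefl L)]
        calc A ^ h * (A ^ L * (2 * 1 + (A - 1) * A ^ (L - L - 1) * 0))
            = 2 * (A ^ h * A ^ L) := by ring
          _ = 2 * A ^ (L + h) := by rw [hpw]
      rw [ht, mul_sum]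
      rw [sum_congr rfl (fun i hi => term_mid A L h i (by simp only [mem_Icc] at hi; omega))]
      rw [sum_const, Nat.card_Icc]
      have : L - 1 + 1 - 1 = L - 1 := by omega
      rw [this, smul_eq_mul]
    have rhs_eq : ∑ i ∈ Icc 0 L,
        (if i = 0 ∨ i = L then A ^ (L + h) else (A - 1) * A ^ (L + h - 1))
        = 2 * A ^ (L + h) + (L - 1) * ((A - 1) * A ^ (L + h - 1)) := by
      rw [hsplit0, sum_insert h0not, hsplitL, sum_insert hLnot,
        if_pos (Or.inl rfl), if_pos (Or.inr rfl)]
      rw [sum_congr rfl (fun i hi => if_neg (by simp only [mem_Icc] at hi; omega))]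
      rw [sum_const, Nat.card_Icc]
      have : L - 1 + 1 - 1 = L - 1 := by omega
      rw [this, smul_eq_mul]
      ring
    rw [lhs_eq, rhs_eq]
  · have hlo' : max 1 (L - (P - 1 - h)) = L - (P - 1 - h) := by omega
    have hhi : min L (P - 1 - h) = P - 1 - h := by omega
    rw [hlo', hhi, mul_sum]
    apply sum_congr rfl
    intro i hi
    simp only [mem_Icc] at hi
    rw [if_neg (show ¬(i = 0 ∨ i = L) by omega)]
    exact term_mid A L h i (by omega)

end S5

namespace S5
open Finset

lemma main_count (A P L : ℕ) (hA : 1 ≤ A) (hP : 1 ≤ P) (hL : 1 ≤ L) :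
    ∑ d ∈ (range P) ×ˢ (range P),
      (((range (A ^ d.1)) ×ˢ (range (A ^ d.2))).filter
        (fun e : ℕ × ℕ => d.1 + d.2 = L + 2 * meet A d.1 e.1 d.2 e.2)).card
    = npairs A P L := by
  rw [npairs_eq A P L hL]
  set good := ((range P) ×ˢ (range P)).filter
    (fun d : ℕ × ℕ => L ≤ d.1 + d.2 ∧ d.1 ≤ d.2 + L ∧ d.2 ≤ d.1 + L ∧ (d.1 + d.2) % 2 = L % 2)
    with hgood
  rw [← Finset.sum_subset (filter_subset _ _) (s₁ := good)]
  · -- sum over good = sum over sigma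
    apply Finset.sum_nbij' (i := fun d : ℕ × ℕ => (⟨(d.1 + d.2 - L) / 2, d.1 - (d.1 + d.2 - L) / 2⟩ : Σ _ : ℕ, ℕ))
      (j := fun x : Σ _ : ℕ, ℕ => (x.1 + x.2, x.1 + (L - x.2)))
    · -- maps good into sigma
      rintro ⟨d1, d2⟩ hd
      simp only [hgood, mem_filter, mem_product, mem_range] at hd
      obtain ⟨⟨hd1, hd2⟩, hg1, hg2, hg3, hg4⟩ := hd
      dsimp only
      simp only [mem_sigma, mem_range, mem_Icc]
      constructor
      · omega
      · constructor
        · omega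
        · omega
    · -- maps sigma into good
      rintro ⟨h, i⟩ hx
      simp only [mem_sigma, mem_range, mem_Icc] at hx
      obtain ⟨hh, hi1, hi2⟩ := hx
      dsimp only
      simp only [hgood, mem_filter, mem_product, mem_range]
      omega
    · -- left inverse
      rintro ⟨d1, d2⟩ hd
      simp only [hgood, mem_filter, mem_product, mem_range] at hd
      dsimp only
      simp only [Prod.mk.injEq]
      omega
    · -- right inverse
      rintro ⟨h, i⟩ hx
      simp only [mem_sigma, mem_range, mem_Icc] at hx
      dsimp only
      exact sigma_mk_eq (by omega) (by omega)
    · -- values agree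
      rintro ⟨d1, d2⟩ hd
      simp only [hgood, mem_filter, mem_product, mem_range] at hd
      obtain ⟨⟨hdp1, hdp2⟩, hg1, hg2, hg3, hg4⟩ := hd
      show _ = (if d1 - (d1 + d2 - L) / 2 = 0 ∨ d1 - (d1 + d2 - L) / 2 = L
        then A ^ (L + (d1 + d2 - L) / 2)
        else (A - 1) * A ^ (L + (d1 + d2 - L) / 2 - 1))
      set h := (d1 + d2 - L) / 2 with hh
      set i := d1 - h with hi
      have hd1 : d1 = h + i := by omega
      have hd2 : d2 = h + (L - i) := by omega
      rw [hd1, hd2]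
      exact meet_count A hA L h i hL (by omega)
  · -- terms outside good vanish
    intro d hd hnot
    simp only [hgood, mem_filter, mem_product, mem_range] at hd hnot
    rw [Finset.card_eq_zero, Finset.filter_eq_empty_iff]
    rintro ⟨e1, e2⟩ he
    dsimp only
    simp only [mem_product, mem_range] at he
    intro habs
    have hm : meet A d.1 e1 d.2 e2 ≤ min d.1 d.2 := meet_le
    omega

end S5

namespace S5
open Finset

def mkNode (A j k : ℕ) (hA : 1 ≤ A) (hk : 1 ≤ k) (hkA : k ≤ A ^ j) (d e : ℕ) : TreeNode A :=
  ⟨(j + d, A ^ d * (k - 1) + min e (A ^ d - 1) + 1), by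
    have h1 : 0 < A ^ d := Nat.pow_pos hA
    have hb := pow_bound (j := j) (d := d) (e := min e (A ^ d - 1)) hA hk hkA (by omega)
    constructor
    · show 1 ≤ A ^ d * (k - 1) + min e (A ^ d - 1) + 1
      omega
    · show A ^ d * (k - 1) + min e (A ^ d - 1) + 1 ≤ A ^ (j + d)
      omega⟩

lemma mkNode_j (A j k : ℕ) (hA : 1 ≤ A) (hk : 1 ≤ k) (hkA : k ≤ A ^ j) (d e : ℕ) :
    (mkNode A j k hA hk hkA d e).1.1 = j + d := rfl

lemma mkNode_e (A j k : ℕ) (hA : 1 ≤ A) (hk : 1 ≤ k) (hkA : k ≤ A ^ j) (d e : ℕ)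
    (he : e < A ^ d) : (mkNode A j k hA hk hkA d e).1.2 = A ^ d * (k - 1) + e + 1 := by
  have : min e (A ^ d - 1) = e := by omega
  show A ^ d * (k - 1) + min e (A ^ d - 1) + 1 = A ^ d * (k - 1) + e + 1
  rw [this]

lemma mem_subtree_iff {A j k P : ℕ} (hk : 1 ≤ k) (hP : 1 ≤ P) (v : TreeNode A) :
    v ∈ subtreeNodes A j k P ↔
      ∃ d e, d < P ∧ e < A ^ d ∧ v.1.1 = j + d ∧ v.1.2 = A ^ d * (k - 1) + e + 1 := by
  unfold subtreeNodes
  simp only [Set.mem_setOf_eq]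
  constructor
  · rintro ⟨h1, h2, h3, h4⟩
    have hid : A ^ (v.1.1 - j) * k = A ^ (v.1.1 - j) * (k - 1) + A ^ (v.1.1 - j) := by
      rw [← Nat.mul_succ]; congr 1; omega
    refine ⟨v.1.1 - j, v.1.2 - 1 - A ^ (v.1.1 - j) * (k - 1), ?_, ?_, ?_, ?_⟩
    all_goals omega
  · rintro ⟨d, e, hd, he, h1, h2⟩
    have hvj : v.1.1 - j = d := by omega
    rw [hvj]
    have hid : A ^ d * k = A ^ d * (k - 1) + A ^ d := by
      rw [← Nat.mul_succ]; congr 1; omega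
    refine ⟨by omega, by omega, by omega, by omega⟩

lemma D_coords {A j k : ℕ} (hA : 1 ≤ A) (hk : 1 ≤ k) (hkA : k ≤ A ^ j)
    {v w : TreeNode A} {d1 e1 d2 e2 : ℕ} (h1 : e1 < A ^ d1) (h2 : e2 < A ^ d2)
    (hv1 : v.1.1 = j + d1) (hv2 : v.1.2 = A ^ d1 * (k - 1) + e1 + 1)
    (hw1 : w.1.1 = j + d2) (hw2 : w.1.2 = A ^ d2 * (k - 1) + e2 + 1) :
    D v w = d1 + d2 - 2 * meet A d1 e1 d2 e2 := by
  have hv2' : v.1.2 - 1 = A ^ d1 * (k - 1) + e1 := by omega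
  have hw2' : w.1.2 - 1 = A ^ d2 * (k - 1) + e2 := by omega
  have hD : D v w = v.1.1 + w.1.1
      - 2 * meet A v.1.1 (v.1.2 - 1) w.1.1 (w.1.2 - 1) := rfl
  rw [hD, hv1, hv2', hw1, hw2', meet_shift hA hk hkA h1 h2]
  have := meet_le (A := A) (d1 := d1) (e1 := e1) (d2 := d2) (e2 := e2)
  omega

lemma edist_coords {A j k L : ℕ} (hA : 1 ≤ A) (hk : 1 ≤ k) (hkA : k ≤ A ^ j)
    {v w : TreeNode A} {d1 e1 d2 e2 : ℕ} (h1 : e1 < A ^ d1) (h2 : e2 < A ^ d2)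
    (hv1 : v.1.1 = j + d1) (hv2 : v.1.2 = A ^ d1 * (k - 1) + e1 + 1)
    (hw1 : w.1.1 = j + d2) (hw2 : w.1.2 = A ^ d2 * (k - 1) + e2 + 1) :
    ((expTree A).edist v w = (L : ℕ∞)) ↔ d1 + d2 = L + 2 * meet A d1 e1 d2 e2 := by
  rw [edist_eq_D hA, Nat.cast_inj, D_coords hA hk hkA h1 h2 hv1 hv2 hw1 hw2]
  have := meet_le (A := A) (d1 := d1) (e1 := e1) (d2 := d2) (e2 := e2)
  omega

end S5


/-- **Lemma 2 (pair-counting in a `P`-generation subtree).**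
In the subgraph of the tree growing at exponential rate `A` induced by the node set `V(j,k,P)`,
the number of (ordered) pairs `(v,w)` of nodes which are separated by exactly `L` edges,
`1 ≤ L ≤ 2(P−1)`, is given by the sum `N(P,L)` (= `npairs A P L`). -/
theorem stmt5 (A : ℕ) (hA : 1 ≤ A) (j k P : ℕ) (hk1 : 1 ≤ k) (hkA : k ≤ A ^ j)
    (hP : 1 ≤ P) (L : ℕ) (hL1 : 1 ≤ L) (hL2 : L ≤ 2 * (P - 1)) :
    Nat.card {p : TreeNode A × TreeNode A //
        p.1 ∈ subtreeNodes A j k P ∧ p.2 ∈ subtreeNodes A j k P ∧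
        (expTree A).edist p.1 p.2 = (L : ℕ∞)} = npairs A P L := by
  classical
  set F : Finset ((_ : ℕ × ℕ) × ℕ × ℕ) := ((Finset.range P) ×ˢ (Finset.range P)).sigma
    (fun d => ((Finset.range (A ^ d.1)) ×ˢ (Finset.range (A ^ d.2))).filter
      (fun e : ℕ × ℕ => d.1 + d.2 = L + 2 * S5.meet A d.1 e.1 d.2 e.2)) with hF
  set f : ((_ : ℕ × ℕ) × ℕ × ℕ) → TreeNode A × TreeNode A :=
    fun x => (S5.mkNode A j k hA hk1 hkA x.1.1 x.2.1,
      S5.mkNode A j k hA hk1 hkA x.1.2 x.2.2) with hf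
  have hFmem : ∀ x : ((_ : ℕ × ℕ) × ℕ × ℕ), x ∈ F ↔
      (x.1.1 < P ∧ x.1.2 < P ∧ x.2.1 < A ^ x.1.1 ∧ x.2.2 < A ^ x.1.2 ∧
        x.1.1 + x.1.2 = L + 2 * S5.meet A x.1.1 x.2.1 x.1.2 x.2.2) := by
    rintro ⟨⟨d1, d2⟩, e1, e2⟩
    simp only [hF, Finset.mem_sigma, Finset.mem_filter, Finset.mem_product, Finset.mem_range]
    tauto
  have key : {p : TreeNode A × TreeNode A | p.1 ∈ subtreeNodes A j k P ∧
      p.2 ∈ subtreeNodes A j k P ∧ (expTree A).edist p.1 p.2 = (L : ℕ∞)} = f '' ↑F := by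
    ext ⟨v, w⟩
    simp only [Set.mem_setOf_eq, Set.mem_image, Finset.mem_coe]
    constructor
    · rintro ⟨hv, hw, hdist⟩
      obtain ⟨d1, e1, hd1, he1, hv1, hv2⟩ := (S5.mem_subtree_iff hk1 hP v).1 hv
      obtain ⟨d2, e2, hd2, he2, hw1, hw2⟩ := (S5.mem_subtree_iff hk1 hP w).1 hw
      refine ⟨⟨(d1, d2), (e1, e2)⟩, ?_, ?_⟩
      · rw [hFmem]
        refine ⟨hd1, hd2, he1, he2, ?_⟩
        exact (S5.edist_coords hA hk1 hkA he1 he2 hv1 hv2 hw1 hw2).1 hdist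
      · rw [hf]
        dsimp only
        refine Prod.ext (Subtype.ext ?_) (Subtype.ext ?_)
        · show ((j + d1 : ℕ), A ^ d1 * (k - 1) + min e1 (A ^ d1 - 1) + 1) = v.1
          have hm : min e1 (A ^ d1 - 1) = e1 := by omega
          rw [hm]
          exact Prod.ext hv1.symm hv2.symm
        · show ((j + d2 : ℕ), A ^ d2 * (k - 1) + min e2 (A ^ d2 - 1) + 1) = w.1
          have hm : min e2 (A ^ d2 - 1) = e2 := by omega
          rw [hm]
          exact Prod.ext hw1.symm hw2.symm
    · rintro ⟨⟨⟨d1, d2⟩, e1, e2⟩, hxF, heq⟩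
      rw [hFmem] at hxF
      dsimp only at hxF
      obtain ⟨hd1, hd2, he1, he2, hcond⟩ := hxF
      have hveq := congrArg Prod.fst heq
      have hweq := congrArg Prod.snd heq
      rw [hf] at hveq hweq
      dsimp only at hveq hweq
      subst hveq; subst hweq
      have hv1 : (S5.mkNode A j k hA hk1 hkA d1 e1).1.1 = j + d1 := rfl
      have hv2 := S5.mkNode_e A j k hA hk1 hkA d1 e1 he1
      have hw1 : (S5.mkNode A j k hA hk1 hkA d2 e2).1.1 = j + d2 := rfl
      have hw2 := S5.mkNode_e A j k hA hk1 hkA d2 e2 he2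
      refine ⟨?_, ?_, ?_⟩
      · exact (S5.mem_subtree_iff hk1 hP _).2 ⟨d1, e1, hd1, he1, hv1, hv2⟩
      · exact (S5.mem_subtree_iff hk1 hP _).2 ⟨d2, e2, hd2, he2, hw1, hw2⟩
      · exact (S5.edist_coords hA hk1 hkA he1 he2 hv1 hv2 hw1 hw2).2 hcond
  have hinj : Set.InjOn f ↑F := by
    rintro ⟨⟨d1, d2⟩, e1, e2⟩ hx ⟨⟨d1', d2'⟩, e1', e2'⟩ hy hxy
    rw [Finset.mem_coe, hFmem] at hx hy
    dsimp only at hx hy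
    obtain ⟨hd1, hd2, he1, he2, -⟩ := hx
    obtain ⟨hd1', hd2', he1', he2', -⟩ := hy
    rw [hf] at hxy
    dsimp only at hxy
    have h1 := congrArg (fun p : TreeNode A × TreeNode A => p.1.1.1) hxy
    have h2 := congrArg (fun p : TreeNode A × TreeNode A => p.2.1.1) hxy
    dsimp only at h1 h2
    rw [S5.mkNode_j, S5.mkNode_j] at h1
    rw [S5.mkNode_j, S5.mkNode_j] at h2
    have hdd1 : d1 = d1' := by omega
    have hdd2 : d2 = d2' := by omega
    subst hdd1; subst hdd2
    have h3 := congrArg (fun p : TreeNode A × TreeNode A => p.1.1.2) hxy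
    have h4 := congrArg (fun p : TreeNode A × TreeNode A => p.2.1.2) hxy
    dsimp only at h3 h4
    rw [S5.mkNode_e A j k hA hk1 hkA d1 e1 he1,
      S5.mkNode_e A j k hA hk1 hkA d1 e1' he1'] at h3
    rw [S5.mkNode_e A j k hA hk1 hkA d2 e2 he2,
      S5.mkNode_e A j k hA hk1 hkA d2 e2' he2'] at h4
    have : e1 = e1' := by omega
    have : e2 = e2' := by omega
    subst this
    simp_all
  calc Nat.card {p : TreeNode A × TreeNode A //
        p.1 ∈ subtreeNodes A j k P ∧ p.2 ∈ subtreeNodes A j k P ∧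
        (expTree A).edist p.1 p.2 = (L : ℕ∞)}
      = ({p : TreeNode A × TreeNode A | p.1 ∈ subtreeNodes A j k P ∧
          p.2 ∈ subtreeNodes A j k P ∧
          (expTree A).edist p.1 p.2 = (L : ℕ∞)} : Set _).ncard :=
        Nat.card_coe_set_eq _
    _ = (f '' ↑F).ncard := by rw [key]
    _ = F.card := by rw [Set.ncard_image_of_injOn hinj, Set.ncard_coe_finset]
    _ = npairs A P L := by
        rw [hF, Finset.card_sigma]
        exact S5.main_count A P L hA hP hL1
end

section
/- There is a constant 0 < C < ∞, not depending on P, L and A, such that for all A ∈ ℕ₊, P ∈ ℕ₊ and 1 ≤ L ≤ 2(P−1), N(P,L) ≤ C · P · A^{P + L/2}, where N(P,L) = Σ_{h=0}^{⌊P−1−L/2⌋} A^h Σ_{i = max(1, L−(P−1−h))}^{min(L, P−1−h)} A^i (2·1{L=i} + (A−1)A^{L−i−1}·1{L>i}). -/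
open MeasureTheory ProbabilityTheory Filter
open scoped ENNReal NNReal

private lemma npairsGeomLe {A : ℕ} (hA : 2 ≤ A) :
    ∀ n, 1 ≤ n → ∑ h ∈ Finset.range n, A ^ h ≤ 2 * A ^ (n - 1) := by
  intro n
  induction n with
  | zero => omega
  | succ m ih =>
    intro _
    rcases Nat.eq_zero_or_pos m with hm | hm
    · subst hm; simp
    · rw [Finset.sum_range_succ]
      have h1 := ih hm
      have hA' : A * A ^ (m - 1) = A ^ m := by
        rw [← pow_succ']; congr 1; omega
      have h2 : 2 * A ^ (m - 1) ≤ A ^ m := by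
        calc 2 * A ^ (m - 1) ≤ A * A ^ (m - 1) := Nat.mul_le_mul_right _ hA
          _ = A ^ m := hA'
      have : ∑ h ∈ Finset.range m, A ^ h + A ^ m ≤ 2 * A ^ m := by omega
      simpa using this

private lemma npairsInnerLe (A L a b : ℕ) (hA : 1 ≤ A) (ha : 1 ≤ a) (hb : b ≤ L) :
    ∑ i ∈ Finset.Icc a b,
      A ^ i * (2 * (if L = i then 1 else 0) + (A - 1) * A ^ (L - i - 1) * (if i < L then 1 else 0))
      ≤ 2 * A ^ L + L * ((A - 1) * A ^ L) := by
  have hsplit : ∀ i : ℕ,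
      A ^ i * (2 * (if L = i then 1 else 0) + (A - 1) * A ^ (L - i - 1) * (if i < L then 1 else 0))
      = (if L = i then 2 * A ^ i else 0)
        + A ^ i * ((A - 1) * A ^ (L - i - 1) * (if i < L then 1 else 0)) := by
    intro i
    split <;> ring
  rw [Finset.sum_congr rfl fun i _ => hsplit i, Finset.sum_add_distrib]
  have h1 : ∑ i ∈ Finset.Icc a b, (if L = i then 2 * A ^ i else 0) ≤ 2 * A ^ L := by
    rw [Finset.sum_ite_eq]
    split
    · exact le_rfl
    · positivity
  have h2 : ∑ i ∈ Finset.Icc a b,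
      A ^ i * ((A - 1) * A ^ (L - i - 1) * (if i < L then 1 else 0)) ≤ L * ((A - 1) * A ^ L) := by
    have hcard : (Finset.Icc a b).card ≤ L := by
      rw [Nat.card_Icc]; omega
    calc ∑ i ∈ Finset.Icc a b,
        A ^ i * ((A - 1) * A ^ (L - i - 1) * (if i < L then 1 else 0))
        ≤ ∑ i ∈ Finset.Icc a b, (A - 1) * A ^ L := by
          apply Finset.sum_le_sum
          intro i hi
          simp only [Finset.mem_Icc] at hi
          by_cases hiL : i < L
          · rw [if_pos hiL]
            have he : i + (L - i - 1) = L - 1 := by omega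
            calc A ^ i * ((A - 1) * A ^ (L - i - 1) * 1)
                = (A - 1) * (A ^ i * A ^ (L - i - 1)) := by ring
              _ = (A - 1) * A ^ (L - 1) := by rw [← pow_add, he]
              _ ≤ (A - 1) * A ^ L := by
                  apply Nat.mul_le_mul_left
                  exact Nat.pow_le_pow_right hA (by omega)
          · rw [if_neg hiL]; simp
      _ = (Finset.Icc a b).card * ((A - 1) * A ^ L) := by
          rw [Finset.sum_const, smul_eq_mul]
      _ ≤ L * ((A - 1) * A ^ L) := Nat.mul_le_mul_right _ hcard
  exact Nat.add_le_add h1 h2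

private lemma npairsLe (A P L : ℕ) (hA : 1 ≤ A) (hP : 1 ≤ P) (hL : 1 ≤ L)
    (hLP : L ≤ 2 * (P - 1)) : npairs A P L ≤ 8 * P * A ^ (P + L / 2) := by
  set n := P - 1 - (L + 1) / 2 + 1 with hn
  have step1 : npairs A P L ≤ ∑ h ∈ Finset.range n, A ^ h * (2 * A ^ L + L * ((A - 1) * A ^ L)) := by
    apply Finset.sum_le_sum
    intro h _
    apply Nat.mul_le_mul_left
    exact npairsInnerLe A L _ _ hA (le_max_left _ _) (min_le_left _ _)
  have step2 : ∑ h ∈ Finset.range n, A ^ h * (2 * A ^ L + L * ((A - 1) * A ^ L))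
      = (∑ h ∈ Finset.range n, A ^ h) * ((2 + L * (A - 1)) * A ^ L) := by
    rw [Finset.sum_mul]
    apply Finset.sum_congr rfl
    intro h _
    ring
  rw [step2] at step1
  rcases eq_or_lt_of_le hA with hA1 | hA2
  · -- A = 1
    have : A = 1 := hA1.symm
    subst this
    have hsum : (∑ h ∈ Finset.range n, 1 ^ h) * ((2 + L * (1 - 1)) * 1 ^ L) = 2 * n := by
      simp [mul_comm]
    rw [hsum] at step1
    have hnP : n ≤ P := by omega
    calc npairs 1 P L ≤ 2 * n := step1
      _ ≤ 8 * P * 1 ^ (P + L / 2) := by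
          simp only [one_pow, mul_one]
          omega
  · -- A ≥ 2
    have hA2' : 2 ≤ A := hA2
    have hg := npairsGeomLe hA2' n (by omega)
    have hC : 2 + L * (A - 1) ≤ 2 * P * A := by
      have h1 : L * (A - 1) ≤ 2 * (P - 1) * (A - 1) := Nat.mul_le_mul_right _ hLP
      have h2 : 2 + 2 * (P - 1) * (A - 1) ≤ 2 * P * A := by
        obtain ⟨p, rfl⟩ : ∃ p, P = p + 1 := ⟨P - 1, by omega⟩
        obtain ⟨a, rfl⟩ : ∃ a, A = a + 2 := ⟨A - 2, by omega⟩
        have e1 : a + 2 - 1 = a + 1 := by omega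
        have e2 : p + 1 - 1 = p := by omega
        rw [e1, e2]
        nlinarith
      omega
    have key : (∑ h ∈ Finset.range n, A ^ h) * ((2 + L * (A - 1)) * A ^ L)
        ≤ (2 * A ^ (n - 1)) * ((2 * P * A) * A ^ L) :=
      Nat.mul_le_mul hg (Nat.mul_le_mul_right _ hC)
    have hexp : (n - 1) + 1 + L = P + L / 2 := by omega
    have heq : (2 * A ^ (n - 1)) * ((2 * P * A) * A ^ L) = 4 * P * A ^ (P + L / 2) := by
      rw [← hexp, pow_add, pow_add, pow_one]
      ring
    rw [heq] at key
    calc npairs A P L ≤ 4 * P * A ^ (P + L / 2) := le_trans step1 key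
      _ ≤ 8 * P * A ^ (P + L / 2) := by
          apply Nat.mul_le_mul_right
          omega

/-- **Uniform bound `N(P,L) ≤ C·P·A^{P+L/2}`.**
There is a constant `0 < C < ∞`, not depending on `P`, `L` and `A`, such that
`N(P,L) ≤ C · P · A^{P+L/2}` for all `A, P ∈ ℕ₊` and `1 ≤ L ≤ 2(P−1)`. -/
theorem stmt7 :
    ∃ C : ℝ, 0 < C ∧ ∀ A P L : ℕ, 1 ≤ A → 1 ≤ P → 1 ≤ L → L ≤ 2 * (P - 1) →
      (npairs A P L : ℝ) ≤ C * (P : ℝ) * (A : ℝ) ^ ((P : ℝ) + (L : ℝ) / 2) := by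
  refine ⟨8, by norm_num, fun A P L hA hP hL hLP => ?_⟩
  have key := npairsLe A P L hA hP hL hLP
  have hA1 : (1 : ℝ) ≤ (A : ℝ) := by exact_mod_cast hA
  have h1 : (npairs A P L : ℝ) ≤ 8 * (P : ℝ) * (A : ℝ) ^ (P + L / 2 : ℕ) := by
    exact_mod_cast key
  have hexp : ((P + L / 2 : ℕ) : ℝ) ≤ (P : ℝ) + (L : ℝ) / 2 := by
    push_cast
    have := Nat.cast_div_le (α := ℝ) (m := L) (n := 2)
    push_cast at this
    linarith
  have h2 : (A : ℝ) ^ (P + L / 2 : ℕ) ≤ (A : ℝ) ^ ((P : ℝ) + (L : ℝ) / 2) := by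
    rw [← Real.rpow_natCast (A : ℝ) (P + L / 2)]
    exact Real.rpow_le_rpow_of_exponent_le hA1 hexp
  have hPpos : (0 : ℝ) ≤ 8 * (P : ℝ) := by positivity
  calc (npairs A P L : ℝ) ≤ 8 * (P : ℝ) * (A : ℝ) ^ (P + L / 2 : ℕ) := h1
    _ ≤ 8 * (P : ℝ) * (A : ℝ) ^ ((P : ℝ) + (L : ℝ) / 2) :=
        mul_le_mul_of_nonneg_left h2 hPpos
end

section
/- Let T = (V,E) be the tree growing at exponential rate A and suppose the α-mixing coefficients of a random field on T decay at a super-exponential rate, i.e., there is a positive increasing function g with g(n) → ∞ as n → ∞ such that α_T(n) ≤ exp(−n·g(n)) for all n ∈ ℕ₊. Then the summability condition Σ_{k=1}^{2(P−1)} α_T(k)·N(P,k) ∈ O(P·A^P) holds, i.e., there is a constant c < ∞ with Σ_{k=1}^{2(P−1)} α_T(k)·N(P,k) ≤ c·P·A^P for all P ∈ ℕ₊. -/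
open MeasureTheory ProbabilityTheory Filter
open scoped ENNReal NNReal

private lemma geom_le_aux (A : ℕ) (hA : 2 ≤ A) : ∀ n, ∑ h ∈ Finset.range (n+1), A^h ≤ 2 * A^n := by
  intro n
  induction n with
  | zero => simp
  | succ n ih =>
    rw [Finset.sum_range_succ]
    have h1 : 1 ≤ A ^ n := Nat.one_le_pow _ _ (by omega)
    have : 2 * A ^ n + A ^ (n+1) ≤ 2 * A ^ (n+1) := by
      rw [pow_succ]; nlinarith
    omega

private lemma npairs_le (A P k : ℕ) (hA : 1 ≤ A) (hk1 : 1 ≤ k) (hk2 : k ≤ 2*(P-1)) (hP : 1 ≤ P) :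
    npairs A P k ≤ 4 * P * A ^ (P - 1 + k / 2) := by
  rcases eq_or_lt_of_le hA with hA1 | hA2
  · -- A = 1
    subst hA1
    have : npairs 1 P k ≤ ∑ h ∈ Finset.range (P - 1 - (k + 1) / 2 + 1), 2 := by
      unfold npairs
      apply Finset.sum_le_sum
      intro h _
      simp only [one_pow, one_mul]
      have : (∑ i ∈ Finset.Icc (max 1 (k - (P - 1 - h))) (min k (P - 1 - h)),
          (2 * (if k = i then 1 else 0) + (1 - 1) * 1 * (if i < k then 1 else 0)))
          ≤ ∑ i ∈ Finset.Icc (max 1 (k - (P - 1 - h))) (min k (P - 1 - h)),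
            2 * (if k = i then 1 else 0) := by
      -- simplify (1-1)=0
        apply Finset.sum_le_sum; intro i _; simp
      refine le_trans this ?_
      rw [← Finset.mul_sum]
      have := Finset.sum_ite_eq (Finset.Icc (max 1 (k - (P - 1 - h))) (min k (P - 1 - h))) k
        (fun _ => (1:ℕ))
      rw [this]
      split <;> simp
    refine le_trans this ?_
    rw [Finset.sum_const, Finset.card_range, smul_eq_mul, one_pow]
    omega
  · -- 2 ≤ A
    have hA2' : 2 ≤ A := hA2
    have hinner : ∀ h, (∑ i ∈ Finset.Icc (max 1 (k - (P - 1 - h))) (min k (P - 1 - h)),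
        A ^ i * (2 * (if k = i then 1 else 0) + (A - 1) * A ^ (k - i - 1) * (if i < k then 1 else 0)))
        ≤ 2 * P * A ^ k := by
      intro h
      have hterm : ∀ i ∈ Finset.Icc (max 1 (k - (P - 1 - h))) (min k (P - 1 - h)),
          A ^ i * (2 * (if k = i then 1 else 0) + (A - 1) * A ^ (k - i - 1) * (if i < k then 1 else 0))
          ≤ 2 * A ^ k := by
        intro i hi
        rw [Finset.mem_Icc] at hi
        have hik : i ≤ k := le_trans hi.2 (min_le_left _ _)
        rcases eq_or_lt_of_le hik with h' | h'
        · subst h'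
          simp [Nat.lt_irrefl]
          ring_nf
          omega
        · have hne : k ≠ i := Nat.ne_of_gt h'
          simp [hne, h']
          have : A ^ i * ((A - 1) * A ^ (k - i - 1)) ≤ A ^ i * (A * A ^ (k - i - 1)) := by
            apply Nat.mul_le_mul_left
            apply Nat.mul_le_mul_right
            omega
          refine le_trans this ?_
          have : A ^ i * (A * A ^ (k - i - 1)) = A ^ k := by
            rw [← pow_succ']
            rw [← pow_add]
            congr 1
            omega
          rw [this]
          omega
      calc ∑ i ∈ Finset.Icc (max 1 (k - (P - 1 - h))) (min k (P - 1 - h)),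
            A ^ i * (2 * (if k = i then 1 else 0) + (A - 1) * A ^ (k - i - 1) * (if i < k then 1 else 0))
          ≤ (Finset.Icc (max 1 (k - (P - 1 - h))) (min k (P - 1 - h))).card * (2 * A ^ k) := by
            apply Finset.sum_le_card_nsmul _ _ _ hterm
        _ ≤ P * (2 * A ^ k) := by
            apply Nat.mul_le_mul_right
            rw [Nat.card_Icc]
            have : min k (P - 1 - h) ≤ P - 1 := le_trans (min_le_right _ _) (by omega)
            omega
        _ = 2 * P * A ^ k := by ring
    calc npairs A P k ≤ ∑ h ∈ Finset.range (P - 1 - (k + 1) / 2 + 1), A ^ h * (2 * P * A ^ k) := by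
          apply Finset.sum_le_sum
          intro h _
          exact Nat.mul_le_mul_left _ (hinner h)
      _ = (∑ h ∈ Finset.range (P - 1 - (k + 1) / 2 + 1), A ^ h) * (2 * P * A ^ k) := by
          rw [Finset.sum_mul]
      _ ≤ (2 * A ^ (P - 1 - (k + 1) / 2)) * (2 * P * A ^ k) := by
          apply Nat.mul_le_mul_right
          exact geom_le_aux A hA2' _
      _ = 4 * P * (A ^ (P - 1 - (k + 1) / 2) * A ^ k) := by ring
      _ = 4 * P * A ^ (P - 1 + k / 2) := by
          rw [← pow_add]
          congr 2
          omega

/-- **Super-exponentially decaying mixing coefficients satisfy the summability condition.**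
If a nonincreasing sequence `α : ℕ → [0,1]` of α-mixing coefficients decays at a
super-exponential rate, i.e. `α(n) ≤ exp(−n·g(n))` for a positive increasing function `g`
with `g(n) → ∞`, then `Σ_{k=1}^{2(P−1)} α(k)·N(P,k) ∈ O(P·A^P)`. -/
theorem stmt12 (A : ℕ) (hA : 1 ≤ A) (α : ℕ → ℝ) (hmono : Antitone α)
    (hα0 : ∀ n, 0 ≤ α n) (hα1 : ∀ n, α n ≤ 1)
    (g : ℕ → ℝ) (hgpos : ∀ n, 0 < g n) (hgmono : Monotone g)
    (hgtop : Tendsto g atTop atTop)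
    (hαg : ∀ n : ℕ, 1 ≤ n → α n ≤ Real.exp (-(n : ℝ) * g n)) :
    ∃ c : ℝ, ∀ P : ℕ, 1 ≤ P →
      ∑ k ∈ Finset.Icc 1 (2 * (P - 1)), α k * (npairs A P k : ℝ) ≤
        c * (P : ℝ) * (A : ℝ) ^ P := by
  have hA1 : (1:ℝ) ≤ (A:ℝ) := by exact_mod_cast hA
  have hA0 : (0:ℝ) < (A:ℝ) := by linarith
  -- choose n₀ with g n ≥ 1 + log A for n ≥ n₁
  obtain ⟨n₁, hn₁⟩ := Filter.eventually_atTop.mp (hgtop.eventually_ge_atTop (1 + Real.log A))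
  set n₀ : ℕ := n₁ + 1 with hn₀def
  set r : ℝ := Real.exp (-1) with hrdef
  have hr0 : 0 ≤ r := le_of_lt (Real.exp_pos _)
  have hr1 : r < 1 := by
    rw [hrdef]
    exact Real.exp_lt_one_iff.mpr (by norm_num)
  set S : ℝ := (n₀:ℝ) * (A:ℝ)^n₀ + (1-r)⁻¹ with hSdef
  have hS0 : 0 ≤ S := by
    have h1 : 0 ≤ (1-r)⁻¹ := inv_nonneg.mpr (by linarith)
    have h2 : (0:ℝ) ≤ (n₀:ℝ) * (A:ℝ)^n₀ := by positivity
    rw [hSdef]; linarith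
  refine ⟨4 * S, fun P hP => ?_⟩
  have key : ∀ k ∈ Finset.Icc 1 (2*(P-1)),
      α k * ((A:ℝ)^(k/2 : ℕ)) ≤ (if k < n₀ then (A:ℝ)^n₀ else 0) + r ^ k := by
    intro k hk
    rw [Finset.mem_Icc] at hk
    by_cases hkn : k < n₀
    · rw [if_pos hkn]
      have h1 : α k * (A:ℝ)^(k/2 : ℕ) ≤ 1 * (A:ℝ)^(k/2 : ℕ) :=
        mul_le_mul_of_nonneg_right (hα1 k) (by positivity)
      have h2 : (A:ℝ)^(k/2 : ℕ) ≤ (A:ℝ)^n₀ := pow_le_pow_right₀ hA1 (by omega)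
      have h3 : (0:ℝ) ≤ r ^ k := by positivity
      nlinarith
    · rw [if_neg hkn]
      push_neg at hkn
      have hgk : 1 + Real.log A ≤ g k := hn₁ k (by omega)
      have hαk : α k ≤ Real.exp (-(k:ℝ) * (1 + Real.log A)) := by
        refine le_trans (hαg k hk.1) ?_
        apply Real.exp_le_exp.mpr
        have hk0 : (0:ℝ) ≤ (k:ℝ) := Nat.cast_nonneg k
        nlinarith
      have hpow : (A:ℝ)^(k/2 : ℕ) ≤ (A:ℝ)^k := pow_le_pow_right₀ hA1 (Nat.div_le_self k 2)
      have hcomp : Real.exp (-(k:ℝ) * (1 + Real.log A)) * (A:ℝ)^k = r ^ k := by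
        rw [hrdef, ← Real.exp_nat_mul]
        rw [← Real.exp_log (pow_pos hA0 k), ← Real.exp_add]
        congr 1
        rw [Real.log_pow]
        push_cast
        ring
      calc α k * (A:ℝ)^(k/2 : ℕ)
          ≤ Real.exp (-(k:ℝ) * (1 + Real.log A)) * (A:ℝ)^k := by
            apply mul_le_mul hαk hpow (by positivity) (le_of_lt (Real.exp_pos _))
        _ = r ^ k := hcomp
        _ ≤ 0 + r ^ k := by linarith
  set M := 2*(P-1) with hM
  have step1 : ∑ k ∈ Finset.Icc 1 M, α k * (npairs A P k : ℝ)
      ≤ ∑ k ∈ Finset.Icc 1 M, (4*(P:ℝ)*(A:ℝ)^(P-1)) * (α k * (A:ℝ)^(k/2 : ℕ)) := by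
    apply Finset.sum_le_sum
    intro k hk
    rw [Finset.mem_Icc] at hk
    have hnp : (npairs A P k : ℝ) ≤ 4*(P:ℝ)*(A:ℝ)^(P-1+k/2 : ℕ) := by
      exact_mod_cast npairs_le A P k hA hk.1 hk.2 hP
    calc α k * (npairs A P k : ℝ) ≤ α k * (4*(P:ℝ)*(A:ℝ)^(P-1+k/2 : ℕ)) :=
          mul_le_mul_of_nonneg_left hnp (hα0 k)
      _ = (4*(P:ℝ)*(A:ℝ)^(P-1)) * (α k * (A:ℝ)^(k/2 : ℕ)) := by rw [pow_add]; ring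
  have sumT : ∑ k ∈ Finset.Icc 1 M, α k * (A:ℝ)^(k/2 : ℕ) ≤ S := by
    have h1 : ∑ k ∈ Finset.Icc 1 M, α k * (A:ℝ)^(k/2 : ℕ)
        ≤ ∑ k ∈ Finset.Icc 1 M, ((if k < n₀ then (A:ℝ)^n₀ else 0) + r ^ k) :=
      Finset.sum_le_sum key
    have h2 : ∑ k ∈ Finset.Icc 1 M, (if k < n₀ then (A:ℝ)^n₀ else 0) ≤ (n₀:ℝ) * (A:ℝ)^n₀ := by
      rw [← Finset.sum_filter]
      rw [Finset.sum_const, nsmul_eq_mul]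
      have hcard : ((Finset.Icc 1 M).filter (· < n₀)).card ≤ n₀ := by
        have hsub : (Finset.Icc 1 M).filter (· < n₀) ⊆ Finset.Icc 1 n₀ := by
          intro x hx
          simp only [Finset.mem_filter, Finset.mem_Icc] at hx ⊢
          omega
        calc ((Finset.Icc 1 M).filter (· < n₀)).card ≤ (Finset.Icc 1 n₀).card :=
              Finset.card_le_card hsub
          _ = n₀ := by rw [Nat.card_Icc]; omega
      have : (((Finset.Icc 1 M).filter (· < n₀)).card : ℝ) ≤ (n₀:ℝ) := by exact_mod_cast hcard
      have hApos : (0:ℝ) ≤ (A:ℝ)^n₀ := by positivity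
      nlinarith
    have h3 : ∑ k ∈ Finset.Icc 1 M, r ^ k ≤ (1-r)⁻¹ := by
      have hle : ∑ k ∈ Finset.Icc 1 M, r ^ k ≤ ∑' k : ℕ, r ^ k :=
        Summable.sum_le_tsum _ (fun i _ => by positivity) (summable_geometric_of_lt_one hr0 hr1)
      rwa [tsum_geometric_of_lt_one hr0 hr1] at hle
    rw [Finset.sum_add_distrib] at h1
    rw [hSdef]
    linarith
  have hpowP : (A:ℝ)^(P-1) ≤ (A:ℝ)^P := pow_le_pow_right₀ hA1 (by omega)
  have hTnn : (0:ℝ) ≤ 4*(P:ℝ) := by positivity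
  calc ∑ k ∈ Finset.Icc 1 M, α k * (npairs A P k : ℝ)
      ≤ (4*(P:ℝ)*(A:ℝ)^(P-1)) * ∑ k ∈ Finset.Icc 1 M, α k * (A:ℝ)^(k/2 : ℕ) := by
        rw [← Finset.mul_sum] at step1; exact step1
    _ ≤ (4*(P:ℝ)*(A:ℝ)^(P-1)) * S := by
        apply mul_le_mul_of_nonneg_left sumT
        positivity
    _ ≤ 4 * S * (P:ℝ) * (A:ℝ)^P := by
        have h4 : (0:ℝ) ≤ 4*(P:ℝ)*S := by positivity
        nlinarith
end

section
/- Let G = (V, E' ∪ Ẽ) be a graph growing at exponential rate A with underlying tree T = (V,E'), and suppose S := sup{ d_T(v,w) : (v,w) ∈ Ẽ } < ∞ with S ≥ 1. Then for all nodes v ≠ w in V: max(1, d_T(v,w)/S) ≤ d_G(v,w) ≤ d_T(v,w). Consequently, for any random field {Z_v : v ∈ V} the α-mixing coefficients satisfy α_T(⌈S·n⌉) ≤ α_G(n) ≤ α_T(n) for all n ∈ ℕ; in particular, strong mixing w.r.t. G implies strong mixing w.r.t. T and vice versa. -/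
open MeasureTheory ProbabilityTheory Filter
open scoped ENNReal NNReal

section Aux

variable {Ω : Type*} [MeasurableSpace Ω] (μ : Measure Ω) [IsProbabilityMeasure μ]
variable {V : Type*} (Z : V → Ω → ℝ)

/-- The inner double supremum appearing in `alphaMix`. -/
noncomputable def inSup (I J : Set V) : ℝ :=
  ⨆ A : Set Ω, ⨆ (_ : MeasurableSet[⨆ v ∈ I, MeasurableSpace.comap (Z v) inferInstance] A),
  ⨆ B : Set Ω, ⨆ (_ : MeasurableSet[⨆ w ∈ J, MeasurableSpace.comap (Z w) inferInstance] B),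
    |(μ (A ∩ B)).toReal - (μ A).toReal * (μ B).toReal|

lemma abs_term_le_one (A B : Set Ω) :
    |(μ (A ∩ B)).toReal - (μ A).toReal * (μ B).toReal| ≤ 1 := by
  have h1 : ∀ s : Set Ω, (μ s).toReal ≤ 1 := by
    intro s
    have : (μ s).toReal ≤ (1 : ℝ≥0∞).toReal :=
      ENNReal.toReal_mono (by simp) prob_le_one
    simpa using this
  have h0 : ∀ s : Set Ω, 0 ≤ (μ s).toReal := fun s => ENNReal.toReal_nonneg
  rw [abs_le]
  constructor <;>
    nlinarith [h1 (A ∩ B), h0 (A ∩ B), h1 A, h1 B, h0 A, h0 B]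

lemma inSup_nonneg (I J : Set V) : 0 ≤ inSup μ Z I J :=
  Real.iSup_nonneg fun _ => Real.iSup_nonneg fun _ => Real.iSup_nonneg fun _ =>
    Real.iSup_nonneg fun _ => abs_nonneg _

lemma inSup_le_one (I J : Set V) : inSup μ Z I J ≤ 1 :=
  Real.iSup_le (fun _ => Real.iSup_le (fun _ => Real.iSup_le (fun _ =>
    Real.iSup_le (fun _ => abs_term_le_one μ _ _) zero_le_one) zero_le_one)
    zero_le_one) zero_le_one

lemma alphaMix_eq (ed : V → V → ℕ∞) (n : ℕ) :
    alphaMix μ ed Z n =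
      ⨆ I : Set V, ⨆ J : Set V, ⨆ (_ : ∀ v ∈ I, ∀ w ∈ J, (n : ℕ∞) ≤ ed v w),
        inSup μ Z I J := rfl

lemma alphaMix_nonneg (ed : V → V → ℕ∞) (n : ℕ) : 0 ≤ alphaMix μ ed Z n := by
  rw [alphaMix_eq]
  exact Real.iSup_nonneg fun _ => Real.iSup_nonneg fun _ =>
    Real.iSup_nonneg fun _ => inSup_nonneg μ Z _ _

lemma alphaMix_mono (ed1 ed2 : V → V → ℕ∞) (n1 n2 : ℕ)
    (h : ∀ v w : V, (n1 : ℕ∞) ≤ ed1 v w → (n2 : ℕ∞) ≤ ed2 v w) :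
    alphaMix μ ed1 Z n1 ≤ alphaMix μ ed2 Z n2 := by
  have hnn := alphaMix_nonneg μ Z ed2 n2
  rw [alphaMix_eq, alphaMix_eq]
  have bdd1 : ∀ I : Set V, BddAbove (Set.range fun J : Set V =>
      ⨆ (_ : ∀ v ∈ I, ∀ w ∈ J, (n2 : ℕ∞) ≤ ed2 v w), inSup μ Z I J) := by
    intro I
    refine ⟨1, ?_⟩
    rintro x ⟨J, rfl⟩
    exact Real.iSup_le (fun _ => inSup_le_one μ Z I J) zero_le_one
  have bdd0 : BddAbove (Set.range fun I : Set V => ⨆ J : Set V,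
      ⨆ (_ : ∀ v ∈ I, ∀ w ∈ J, (n2 : ℕ∞) ≤ ed2 v w), inSup μ Z I J) := by
    refine ⟨1, ?_⟩
    rintro x ⟨I, rfl⟩
    exact Real.iSup_le (fun J => Real.iSup_le (fun _ => inSup_le_one μ Z I J)
      zero_le_one) zero_le_one
  rw [alphaMix_eq μ Z ed2 n2] at hnn
  refine Real.iSup_le (fun I => Real.iSup_le (fun J => Real.iSup_le (fun hIJ => ?_)
    hnn) hnn) hnn
  have hQ : ∀ v ∈ I, ∀ w ∈ J, (n2 : ℕ∞) ≤ ed2 v w :=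
    fun v hv w hw => h v w (hIJ v hv w hw)
  calc inSup μ Z I J
      = ⨆ (_ : ∀ v ∈ I, ∀ w ∈ J, (n2 : ℕ∞) ≤ ed2 v w), inSup μ Z I J :=
        (ciSup_pos (f := fun _ => inSup μ Z I J) hQ).symm
    _ ≤ ⨆ J' : Set V, ⨆ (_ : ∀ v ∈ I, ∀ w ∈ J', (n2 : ℕ∞) ≤ ed2 v w),
          inSup μ Z I J' := le_ciSup (bdd1 I) J
    _ ≤ _ := le_ciSup bdd0 I

end Aux

section Graph

variable {A : ℕ} {G : SimpleGraph (TreeNode A)}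

lemma walk_bound {S : ℕ}
    (hS : ∀ v w : TreeNode A, G.Adj v w → (expTree A).edist v w ≤ (S : ℕ∞)) :
    ∀ {u v : TreeNode A} (p : G.Walk u v),
      (expTree A).edist u v ≤ (S : ℕ∞) * (p.length : ℕ∞) := by
  intro u v p
  induction p with
  | nil => simp
  | @cons a b c h q ih =>
    calc (expTree A).edist a c ≤ (expTree A).edist a b + (expTree A).edist b c :=
          SimpleGraph.edist_triangle
      _ ≤ (S : ℕ∞) + (S : ℕ∞) * (q.length : ℕ∞) := add_le_add (hS _ _ h) ih
      _ = (S : ℕ∞) * (((q.cons h).length : ℕ∞)) := by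
          rw [SimpleGraph.Walk.length_cons]
          push_cast
          ring

lemma tree_le_S_mul {S : ℕ} (hS1 : 1 ≤ S)
    (hS : ∀ v w : TreeNode A, G.Adj v w → (expTree A).edist v w ≤ (S : ℕ∞))
    (v w : TreeNode A) :
    (expTree A).edist v w ≤ (S : ℕ∞) * G.edist v w := by
  by_cases h : G.edist v w = ⊤
  · rw [h, ENat.mul_top (Nat.cast_ne_zero.mpr (by omega))]
    exact le_top
  · obtain ⟨p, hp⟩ := SimpleGraph.exists_walk_of_edist_ne_top h
    rw [← hp]
    exact walk_bound hS p

end Graph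

/-- **Comparison of the tree metric and the graph metric, and of the mixing coefficients.**
If `G = (V, E' ∪ Ẽ)` grows at exponential rate `A` with underlying tree `T = (V,E')` and
`d_T(v,w) ≤ S` for every edge `(v,w)` of `G`, `S ≥ 1`, then for all `v ≠ w`:
`max(1, d_T(v,w)/S) ≤ d_G(v,w) ≤ d_T(v,w)`.  Consequently, for any random field `{Z_v}` the
α-mixing coefficients satisfy `α_T(⌈S·n⌉) ≤ α_G(n) ≤ α_T(n)` for all `n`; in particular,
strong mixing w.r.t. `G` holds iff strong mixing w.r.t. `T` holds. -/
theorem stmt14 {Ω : Type*} [MeasurableSpace Ω] (μ : Measure Ω) [IsProbabilityMeasure μ]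
    (A : ℕ) (hA : 1 ≤ A)
    (G : SimpleGraph (TreeNode A)) (hTG : expTree A ≤ G)
    (S : ℕ) (hS1 : 1 ≤ S)
    (hS : ∀ v w : TreeNode A, G.Adj v w → (expTree A).edist v w ≤ (S : ℕ∞))
    (Z : TreeNode A → Ω → ℝ) :
    (∀ v w : TreeNode A, v ≠ w →
      (1 : ℕ∞) ≤ G.edist v w ∧
      (expTree A).edist v w ≤ (S : ℕ∞) * G.edist v w ∧
      G.edist v w ≤ (expTree A).edist v w) ∧
    (∀ n : ℕ,
      alphaMix μ (expTree A).edist Z (S * n) ≤ alphaMix μ G.edist Z n ∧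
      alphaMix μ G.edist Z n ≤ alphaMix μ (expTree A).edist Z n) ∧
    (Tendsto (alphaMix μ G.edist Z) atTop (nhds 0) ↔
      Tendsto (alphaMix μ (expTree A).edist Z) atTop (nhds 0)) := by
  have hGT : ∀ v w : TreeNode A, G.edist v w ≤ (expTree A).edist v w :=
    fun v w => SimpleGraph.edist_anti hTG
  have hTS : ∀ v w : TreeNode A, (expTree A).edist v w ≤ (S : ℕ∞) * G.edist v w :=
    tree_le_S_mul hS1 hS
  have hcancel : ∀ (n : ℕ) (v w : TreeNode A),
      ((S * n : ℕ) : ℕ∞) ≤ (expTree A).edist v w → (n : ℕ∞) ≤ G.edist v w := by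
    intro n v w h
    by_cases hG : G.edist v w = ⊤
    · rw [hG]; exact le_top
    · obtain ⟨m, hm⟩ := WithTop.ne_top_iff_exists.mp hG
      have h2 : ((S * n : ℕ) : ℕ∞) ≤ ((S * m : ℕ) : ℕ∞) := by
        refine le_trans (le_trans h (hTS v w)) ?_
        rw [← hm]; push_cast; exact le_refl _
      have h3 : S * n ≤ S * m := by exact_mod_cast h2
      have h4 : n ≤ m := Nat.le_of_mul_le_mul_left h3 (by omega)
      rw [← hm]; exact Nat.cast_le.mpr h4
  have halpha : ∀ n : ℕ,
      alphaMix μ (expTree A).edist Z (S * n) ≤ alphaMix μ G.edist Z n ∧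
      alphaMix μ G.edist Z n ≤ alphaMix μ (expTree A).edist Z n := by
    intro n
    constructor
    · exact alphaMix_mono μ Z _ _ _ _ (hcancel n)
    · exact alphaMix_mono μ Z _ _ _ _ (fun v w h => le_trans h (hGT v w))
  refine ⟨?_, halpha, ?_⟩
  · intro v w hne
    refine ⟨?_, ?_, hGT v w⟩
    · exact ENat.one_le_iff_ne_zero.mpr fun h0 =>
        hne (SimpleGraph.edist_eq_zero_iff.mp h0)
    · exact hTS v w
  · constructor
    · intro hG
      have hdiv : Tendsto (fun m : ℕ => m / S) atTop atTop := by
        refine tendsto_atTop_atTop.mpr fun b => ⟨S * b, fun m hm => ?_⟩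
        exact (Nat.le_div_iff_mul_le (by omega)).mpr (by rw [mul_comm]; exact hm)
      refine tendsto_of_tendsto_of_tendsto_of_le_of_le tendsto_const_nhds
        (hG.comp hdiv) (fun m => alphaMix_nonneg μ Z _ m) (fun m => ?_)
      have h1 : alphaMix μ (expTree A).edist Z m ≤
          alphaMix μ (expTree A).edist Z (S * (m / S)) := by
        refine alphaMix_mono μ Z _ _ _ _ (fun v w h => le_trans ?_ h)
        exact_mod_cast Nat.cast_le.mpr (by
          calc S * (m / S) = m / S * S := by ring
            _ ≤ m := Nat.div_mul_le_self m S)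
      exact le_trans h1 (halpha (m / S)).1
    · intro hT
      exact tendsto_of_tendsto_of_tendsto_of_le_of_le tendsto_const_nhds hT
        (fun n => alphaMix_nonneg μ Z _ n) (fun n => (halpha n).2)
end

section
/- Let T = (V,E) be the tree growing at exponential rate A with A ≥ 2, let L ∈ ℕ and P₂, Q₂ ∈ ℕ₊ with Q₂ ≤ P₂ and P₂ + Q₂ < A^L, and let f = 2·⌈log Q₂ / log A⌉. Partition the indices {1,…,A^L} into consecutive blocks of lengths P₂ and Q₂ alternately, and for P ∈ ℕ₊ set A(i) = V(L,(i−1)(P₂+Q₂)+1,P) ∪ … ∪ V(L,(i−1)Q₂+iP₂,P) for i = 1,…,T' with T' = ⌈A^L/(P₂+Q₂)⌉ (intersected with valid indices). Then for any i ≠ i', the graph distance between the node sets A(i) and A(i') satisfies d_T(A(i), A(i')) ≥ 2⌈log Q₂ / log A⌉ = f. -/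
open MeasureTheory ProbabilityTheory Filter
open scoped ENNReal NNReal

/-- The `i`-th big block `A(i) = V(L,(i−1)(P₂+Q₂)+1,P) ∪ … ∪ V(L,(i−1)Q₂+iP₂,P)`
(only root indices `m ≤ A^L` being valid). -/
def blockSet (A L P P₂ Q₂ i : ℕ) : Set (TreeNode A) :=
  ⋃ m ∈ {m : ℕ | (i - 1) * (P₂ + Q₂) + 1 ≤ m ∧ m ≤ (i - 1) * Q₂ + i * P₂ ∧ m ≤ A ^ L},
    subtreeNodes A L m P

section auxlemmas

open SimpleGraph

/-- Along a walk in the tree, the level changes by at most 1 per step. -/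
lemma lvl_walk {A : ℕ} {x y : TreeNode A} (p : (expTree A).Walk x y) :
    x.1.1 ≤ y.1.1 + p.length ∧ y.1.1 ≤ x.1.1 + p.length := by
  induction p with
  | nil => simp
  | @cons a b c h p ih =>
    have hl := SimpleGraph.Walk.length_cons h p
    have h' : _ ∨ _ := h
    rcases h' with ⟨h1, -⟩ | ⟨h1, -⟩ <;> omega

lemma idx_div {A : ℕ} (hA : 2 ≤ A) (d m k : ℕ) (hm : 1 ≤ m)
    (h1 : A ^ d * (m - 1) + 1 ≤ k) (h2 : k ≤ A ^ d * m) :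
    (k - 1) / A ^ d = m - 1 := by
  apply Nat.div_eq_of_lt_le
  · calc (m - 1) * A ^ d = A ^ d * (m - 1) := Nat.mul_comm _ _
    _ ≤ k - 1 := by omega
  · have : (m - 1 + 1) * A ^ d = A ^ d * m := by
      rw [Nat.sub_add_cancel hm, Nat.mul_comm]
    omega

/-- Adjacent nodes at level ≥ ℓ₀ have the same ancestor at level ℓ₀. -/
lemma anc_step {A : ℕ} (hA : 2 ≤ A) (ℓ₀ : ℕ) {u u' : TreeNode A}
    (h : (expTree A).Adj u u') (hu : ℓ₀ ≤ u.1.1) (hu' : ℓ₀ ≤ u'.1.1) :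
    (u.1.2 - 1) / A ^ (u.1.1 - ℓ₀) = (u'.1.2 - 1) / A ^ (u'.1.1 - ℓ₀) := by
  have key : ∀ a b : TreeNode A, ℓ₀ ≤ a.1.1 →
      b.1.1 = a.1.1 + 1 → A * (a.1.2 - 1) + 1 ≤ b.1.2 → b.1.2 ≤ A * a.1.2 →
      (b.1.2 - 1) / A ^ (b.1.1 - ℓ₀) = (a.1.2 - 1) / A ^ (a.1.1 - ℓ₀) := by
    intro a b ha hb h1 h2
    have hb' : b.1.1 - ℓ₀ = (a.1.1 - ℓ₀) + 1 := by omega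
    have hdivA : (b.1.2 - 1) / A = a.1.2 - 1 := by
      apply Nat.div_eq_of_lt_le
      · rw [Nat.mul_comm]; omega
      · have ha2 : 1 ≤ a.1.2 := a.2.1
        have : (a.1.2 - 1 + 1) * A = A * a.1.2 := by
          rw [Nat.sub_add_cancel ha2, Nat.mul_comm]
        omega
    rw [hb', pow_succ', ← Nat.div_div_eq_div_mul, hdivA]
  rcases (h : _ ∨ _) with ⟨h1, h2, h3⟩ | ⟨h1, h2, h3⟩
  · exact (key u u' hu h1 h2 h3).symm
  · exact key u' u hu' h1 h2 h3

/-- Along a walk staying at levels ≥ ℓ₀, the ancestor at level ℓ₀ is constant. -/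
lemma anc_walk {A : ℕ} (hA : 2 ≤ A) (ℓ₀ : ℕ) {x y : TreeNode A}
    (p : (expTree A).Walk x y) (hs : ∀ u ∈ p.support, ℓ₀ ≤ u.1.1) :
    (x.1.2 - 1) / A ^ (x.1.1 - ℓ₀) = (y.1.2 - 1) / A ^ (y.1.1 - ℓ₀) := by
  induction p with
  | nil => rfl
  | @cons a b c h p ih =>
    have ha : ℓ₀ ≤ a.1.1 := hs a (by rw [SimpleGraph.Walk.support_cons]; exact List.mem_cons_self)
    have hb : ℓ₀ ≤ b.1.1 := hs b (by
      rw [SimpleGraph.Walk.support_cons]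
      exact List.mem_cons_of_mem _ p.start_mem_support)
    have h2 := anc_step hA ℓ₀ h ha hb
    rw [h2]
    exact ih (fun u hu => hs u (by
      rw [SimpleGraph.Walk.support_cons]; exact List.mem_cons_of_mem _ hu))

/-- Core separation lemma: nodes in subtrees rooted at level `L` whose root indices
differ by more than `Q₂` are at distance at least `2g`, where `A^(g-1) < Q₂`. -/
lemma core_sep {A : ℕ} (hA : 2 ≤ A) (L m m' Q₂ g : ℕ)
    (hQ : A ^ (g - 1) < Q₂) (hg1 : 1 ≤ g) (hgL : g ≤ L)
    (hm : 1 ≤ m) (hm' : 1 ≤ m') (hsep : m + Q₂ < m')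
    (v w : TreeNode A)
    (hvL : L ≤ v.1.1) (hv1 : A ^ (v.1.1 - L) * (m - 1) + 1 ≤ v.1.2)
    (hv2 : v.1.2 ≤ A ^ (v.1.1 - L) * m)
    (hwL : L ≤ w.1.1) (hw1 : A ^ (w.1.1 - L) * (m' - 1) + 1 ≤ w.1.2)
    (hw2 : w.1.2 ≤ A ^ (w.1.1 - L) * m') :
    ((2 * g : ℕ) : ℕ∞) ≤ (expTree A).edist v w := by
  classical
  rw [SimpleGraph.edist_eq_sInf]
  refine le_sInf ?_
  rintro x ⟨p, rfl⟩
  rw [Nat.cast_le]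
  set ℓ₀ := L - g + 1 with hℓ₀
  by_cases hcase : ∀ u ∈ p.support, ℓ₀ ≤ u.1.1
  · exfalso
    have hwalk := anc_walk hA ℓ₀ p hcase
    -- compute the two ancestors
    have hLl : L - ℓ₀ = g - 1 := by omega
    have hv3 : (v.1.2 - 1) / A ^ (v.1.1 - ℓ₀) = (m - 1) / A ^ (g - 1) := by
      have he : A ^ (v.1.1 - ℓ₀) = A ^ (v.1.1 - L) * A ^ (L - ℓ₀) := by
        rw [← pow_add]; congr 1; omega
      rw [he, ← Nat.div_div_eq_div_mul, idx_div hA _ _ _ hm hv1 hv2, hLl]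
    have hw3 : (w.1.2 - 1) / A ^ (w.1.1 - ℓ₀) = (m' - 1) / A ^ (g - 1) := by
      have he : A ^ (w.1.1 - ℓ₀) = A ^ (w.1.1 - L) * A ^ (L - ℓ₀) := by
        rw [← pow_add]; congr 1; omega
      rw [he, ← Nat.div_div_eq_div_mul, idx_div hA _ _ _ hm' hw1 hw2, hLl]
    have heq : (m - 1) / A ^ (g - 1) = (m' - 1) / A ^ (g - 1) := by
      rw [← hv3, ← hw3, hwalk]
    have hBpos : 0 < A ^ (g - 1) := Nat.pow_pos (by omega)
    have hmod : (m' - 1) % A ^ (g - 1) < A ^ (g - 1) := Nat.mod_lt _ hBpos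
    have hfin : m' - 1 < (m - 1) + A ^ (g - 1) := by
      calc m' - 1 = A ^ (g - 1) * ((m' - 1) / A ^ (g - 1)) + (m' - 1) % A ^ (g - 1) :=
            (Nat.div_add_mod _ _).symm
        _ = A ^ (g - 1) * ((m - 1) / A ^ (g - 1)) + (m' - 1) % A ^ (g - 1) := by rw [heq]
        _ < A ^ (g - 1) * ((m - 1) / A ^ (g - 1)) + A ^ (g - 1) :=
            Nat.add_lt_add_left hmod _
        _ ≤ (m - 1) + A ^ (g - 1) := Nat.add_le_add_right (Nat.mul_div_le _ _) _
    omega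
  · push_neg at hcase
    obtain ⟨u, hu, hulvl⟩ := hcase
    have hsplit := congrArg SimpleGraph.Walk.length (p.take_spec hu)
    rw [SimpleGraph.Walk.length_append] at hsplit
    have h1 := lvl_walk (p.takeUntil u hu)
    have h2 := lvl_walk (p.dropUntil u hu)
    omega

end auxlemmas

/-- **Separation of the blocks.**
In the tree growing at exponential rate `A ≥ 2`, distinct blocks `A(i)`, `A(i')` of subtrees
(with alternating block lengths `P₂` and `Q₂`, `Q₂ ≤ P₂`, `P₂ + Q₂ < A^L`) are at graph
distance at least `f = 2⌈log Q₂ / log A⌉` from each other. -/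
theorem stmt19 (A : ℕ) (hA : 2 ≤ A) (L P P₂ Q₂ : ℕ) (hP : 1 ≤ P)
    (hP₂ : 1 ≤ P₂) (hQ₂ : 1 ≤ Q₂) (hQP : Q₂ ≤ P₂) (hPQ : P₂ + Q₂ < A ^ L)
    (i i' : ℕ) (hi : 1 ≤ i) (hi' : 1 ≤ i')
    (hiT : i ≤ (A ^ L + (P₂ + Q₂) - 1) / (P₂ + Q₂))
    (hiT' : i' ≤ (A ^ L + (P₂ + Q₂) - 1) / (P₂ + Q₂))
    (hii : i ≠ i')
    (v w : TreeNode A)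
    (hv : v ∈ blockSet A L P P₂ Q₂ i) (hw : w ∈ blockSet A L P P₂ Q₂ i') :
    ((2 * ⌈Real.log Q₂ / Real.log A⌉₊ : ℕ) : ℕ∞) ≤ (expTree A).edist v w := by
  set g := ⌈Real.log Q₂ / Real.log A⌉₊ with hg
  rcases Nat.eq_zero_or_pos g with h0 | hgpos
  · simp [h0]
  have hA1 : (1 : ℝ) < (A : ℝ) := by exact_mod_cast (by omega : 1 < A)
  have hlogA : 0 < Real.log A := Real.log_pos hA1
  have hQlt : Q₂ < A ^ L := by omega
  have hQpos : (0 : ℝ) < (Q₂ : ℝ) := by exact_mod_cast hQ₂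
  have hgL : g ≤ L := by
    rw [hg]
    apply Nat.ceil_le.mpr
    rw [div_le_iff₀ hlogA]
    have h1 : Real.log Q₂ ≤ Real.log ((A : ℝ) ^ L) :=
      Real.log_le_log hQpos (by exact_mod_cast hQlt.le)
    rwa [Real.log_pow] at h1
  have hpow : A ^ (g - 1) < Q₂ := by
    have h1 : ((g - 1 : ℕ) : ℝ) < Real.log Q₂ / Real.log A := by
      apply Nat.lt_ceil.mp; rw [← hg]; omega
    have h2 : Real.log ((A : ℝ) ^ (g - 1)) < Real.log Q₂ := by
      rw [Real.log_pow]; exact (lt_div_iff₀ hlogA).mp h1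
    have h3 : (A : ℝ) ^ (g - 1) < (Q₂ : ℝ) :=
      (Real.log_lt_log_iff (by positivity) hQpos).mp h2
    exact_mod_cast h3
  simp only [blockSet, Set.mem_iUnion, Set.mem_setOf_eq, exists_prop] at hv hw
  obtain ⟨m, ⟨hm1, hm2, hm3⟩, hvm⟩ := hv
  obtain ⟨m', ⟨hm'1, hm'2, hm'3⟩, hwm⟩ := hw
  obtain ⟨hvL, -, hv1, hv2⟩ := hvm
  obtain ⟨hwL, -, hw1, hw2⟩ := hwm
  have key : ∀ a b : ℕ, 1 ≤ a → a < b → ∀ x y : ℕ,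
      x ≤ (a - 1) * Q₂ + a * P₂ → (b - 1) * (P₂ + Q₂) + 1 ≤ y → x + Q₂ < y := by
    intro a b h1 h2 x y hx hy
    obtain ⟨j, rfl⟩ : ∃ j, a = j + 1 := ⟨a - 1, by omega⟩
    simp only [Nat.add_sub_cancel] at hx
    have hmul : (j + 1) * (P₂ + Q₂) ≤ (b - 1) * (P₂ + Q₂) :=
      Nat.mul_le_mul_right _ (by omega)
    have e : (j + 1) * (P₂ + Q₂) = j * Q₂ + (j + 1) * P₂ + Q₂ := by ring
    omega
  rcases hii.lt_or_gt with hlt | hlt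
  · exact core_sep hA L m m' Q₂ g hpow hgpos hgL (by omega) (by omega)
      (key i i' hi hlt m m' hm2 hm'1) v w hvL hv1 hv2 hwL hw1 hw2
  · rw [SimpleGraph.edist_comm]
    exact core_sep hA L m' m Q₂ g hpow hgpos hgL (by omega) (by omega)
      (key i' i hi' hlt m' m hm'2 hm1) w v hwL hw1 hw2 hvL hv1 hv2
end
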